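/- arXiv:2401.10459 — 12 statements merged into one kernel-verified Lean document; each statement's English description precedes it below -/
import Mathlib

section
/- Let X be a countably tight completely regular Hausdorff space. Then X is weakly Grothendieck; that is, Cp(X) is a g-space: every subset A of Cp(X) that is countably compact in Cp(X) has compact closure in Cp(X). -/
open Set Filter Topology

def IsLimitPointOf {Z : Type*} [TopologicalSpace Z] (x : Z) (S : Set Z) : Prop :=
  ∀ U : Set Z, IsOpen U → x ∈ U → (S ∩ U).Infinite

def CountablyCompactIn {Z : Type*} [TopologicalSpace Z] (A B : Set Z) : Prop :=
  ∀ S ⊆ A, S.Infinite → ∃ x ∈ B, IsLimitPointOf x S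

def IsGSpace (Y : Type*) [TopologicalSpace Y] : Prop :=
  ∀ A : Set Y, CountablyCompactIn A Set.univ → IsCompact (closure A)

def IsHereditaryGSpace (Y : Type*) [TopologicalSpace Y] : Prop :=
  ∀ B : Set Y, IsGSpace B

def Cp (X : Type*) [TopologicalSpace X] : Type _ := {f : X → ℝ // Continuous f}

instance (X : Type*) [TopologicalSpace X] : TopologicalSpace (Cp X) :=
  inferInstanceAs (TopologicalSpace {f : X → ℝ // Continuous f})

def CpI (X : Type*) [TopologicalSpace X] : Type _ := {f : X → unitInterval // Continuous f}

instance (X : Type*) [TopologicalSpace X] : TopologicalSpace (CpI X) :=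
  inferInstanceAs (TopologicalSpace {f : X → unitInterval // Continuous f})

def CountablyTight (X : Type*) [TopologicalSpace X] : Prop :=
  ∀ (A : Set X) (x : X), x ∈ closure A → ∃ B ⊆ A, B.Countable ∧ x ∈ closure B

def CountablyCompactSpace' (Y : Type*) [TopologicalSpace Y] : Prop :=
  ∀ S : Set Y, S.Infinite → ∃ x : Y, IsLimitPointOf x S

def DULC {X : Type*} [TopologicalSpace X] (A : Set (CpI X)) : Prop :=
  ∀ (f : ℕ → CpI X), (∀ n, f n ∈ A) → ∀ (x : ℕ → X) (𝒰 𝒱 : Ultrafilter ℕ),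
    (∃ y : X, Filter.Tendsto x (𝒱 : Filter ℕ) (nhds y)) →
    ∀ (g h : ℕ → unitInterval) (u v : unitInterval),
      (∀ n, Filter.Tendsto (fun m => (f n).1 (x m)) (𝒱 : Filter ℕ) (nhds (g n))) →
      Filter.Tendsto g (𝒰 : Filter ℕ) (nhds u) →
      (∀ m, Filter.Tendsto (fun n => (f n).1 (x m)) (𝒰 : Filter ℕ) (nhds (h m))) →
      Filter.Tendsto h (𝒱 : Filter ℕ) (nhds v) →
      u = v

def DLC {X : Type*} [TopologicalSpace X] (A : Set (CpI X)) : Prop :=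
  ∀ (f : ℕ → CpI X), (∀ n, f n ∈ A) → ∀ (x : ℕ → X),
    ∀ (g h : ℕ → unitInterval) (u v : unitInterval),
      (∀ n, Filter.Tendsto (fun m => (f n).1 (x m)) Filter.atTop (nhds (g n))) →
      Filter.Tendsto g Filter.atTop (nhds u) →
      (∀ m, Filter.Tendsto (fun n => (f n).1 (x m)) Filter.atTop (nhds (h m))) →
      Filter.Tendsto h Filter.atTop (nhds v) →
      u = v


-- continuity of evaluation on Cp
lemma cp_eval_cont {X : Type*} [TopologicalSpace X] (x : X) :
    Continuous (fun f : Cp X => f.1 x) :=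
  (continuous_apply x).comp continuous_subtype_val

-- indices infinite
lemma indices_infinite {Z : Type*} [TopologicalSpace Z] {h : Z} {f : ℕ → Z}
    (hl : IsLimitPointOf h (Set.range f)) {W : Set Z} (hW : IsOpen W) (hhW : h ∈ W) :
    {n | f n ∈ W}.Infinite := by
  have h1 := hl W hW hhW
  intro hfin
  apply h1
  have : Set.range f ∩ W ⊆ f '' {n | f n ∈ W} := by
    rintro z ⟨⟨n, rfl⟩, hz⟩
    exact ⟨n, hz, rfl⟩
  exact (hfin.image f).subset this

lemma exists_ge_mem {Z : Type*} [TopologicalSpace Z] {h : Z} {f : ℕ → Z}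
    (hl : IsLimitPointOf h (Set.range f)) {W : Set Z} (hW : IsOpen W) (hhW : h ∈ W) (N : ℕ) :
    ∃ n, N ≤ n ∧ f n ∈ W := by
  obtain ⟨n, hn, hn2⟩ := (indices_infinite hl hW hhW).exists_gt N
  exact ⟨n, hn2.le, hn⟩

-- fiber lemma
lemma exists_infinite_fiber_of_range_finite {α : Type*} {f : ℕ → α}
    (hfin : (Set.range f).Finite) : ∃ a, {n | f n = a}.Infinite := by
  haveI : Finite (Set.range f) := hfin
  obtain ⟨y, hy⟩ := Finite.exists_infinite_fiber (Set.rangeFactorization f)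
  refine ⟨y.1, ?_⟩
  rw [← Set.infinite_coe_iff]
  refine Infinite.of_injective (fun n : (Set.rangeFactorization f ⁻¹' {y}) => (⟨n.1, ?_⟩ : {n | f n = y.1})) ?_
  · have := n.2
    simp only [Set.mem_preimage, Set.mem_singleton_iff] at this
    exact congrArg Subtype.val this
  · intro a b hab
    exact Subtype.ext (by simpa [Subtype.ext_iff] using hab)

-- continuity from closure-image condition
lemma continuous_of_image_closure {X Y : Type*} [TopologicalSpace X] [TopologicalSpace Y]
    {f : X → Y} (h : ∀ s : Set X, f '' closure s ⊆ closure (f '' s)) : Continuous f := by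
  rw [continuous_iff_isClosed]
  intro t ht
  have : closure (f ⁻¹' t) ⊆ f ⁻¹' t := by
    intro x hx
    have : f x ∈ closure (f '' (f ⁻¹' t)) := h _ ⟨x, hx, rfl⟩
    have h2 : closure (f '' (f ⁻¹' t)) ⊆ t :=
      closure_minimal (Set.image_preimage_subset f t) ht
    exact h2 this
  exact isClosed_of_closure_subset this


-- Step 2 key lemma
lemma closure_subset_continuous {X : Type*} [TopologicalSpace X] (ht : CountablyTight X)
    {A : Set (Cp X)} (hA : CountablyCompactIn A Set.univ)
    {g : X → ℝ} (hg : g ∈ closure ((fun f : Cp X => f.1) '' A)) : Continuous g := by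
  classical
  apply continuous_of_image_closure
  intro s
  rintro _ ⟨x₀, hx₀, rfl⟩
  obtain ⟨C, hCs, hCc, hx₀C⟩ := ht s x₀ hx₀
  have key : g x₀ ∈ closure (g '' C) := by
    by_contra hcon
    rw [Metric.mem_closure_iff] at hcon
    push_neg at hcon
    obtain ⟨ε, hε, hεC⟩ := hcon
    rcases C.eq_empty_or_nonempty with rfl | hCne
    · simp at hx₀C
    obtain ⟨y, rfl⟩ := hCc.exists_eq_range hCne
    have hfar : ∀ i, ε ≤ |g (y i) - g x₀| := by
      intro i
      have := hεC (g (y i)) ⟨y i, ⟨i, rfl⟩, rfl⟩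
      rwa [Real.dist_eq, abs_sub_comm] at this
    -- choose approximating functions
    have hchoice : ∀ n : ℕ, ∃ F : Cp X, F ∈ A ∧
        (∀ i ≤ n, |F.1 (y i) - g (y i)| < ε/4) ∧ |F.1 x₀ - g x₀| < ε/4 := by
      intro n
      set V : Set (X → ℝ) :=
        (⋂ i ∈ Finset.range (n+1), (fun k : X → ℝ => k (y i)) ⁻¹' Metric.ball (g (y i)) (ε/4)) ∩
          ((fun k : X → ℝ => k x₀) ⁻¹' Metric.ball (g x₀) (ε/4)) with hV
      have hVopen : IsOpen V := by
        apply IsOpen.inter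
        · exact isOpen_biInter_finset fun i _ =>
            (continuous_apply (y i)).isOpen_preimage _ Metric.isOpen_ball
        · exact (continuous_apply x₀).isOpen_preimage _ Metric.isOpen_ball
      have hgV : g ∈ V := by
        constructor
        · simp only [Set.mem_iInter, Set.mem_preimage, Metric.mem_ball]
          intro i _
          simp [hε]
        · simp only [Set.mem_preimage, Metric.mem_ball]
          simp [hε]
      obtain ⟨k, hkV, hkA⟩ := mem_closure_iff.1 hg V hVopen hgV
      obtain ⟨F, hFA, rfl⟩ := hkA
      refine ⟨F, hFA, ?_, ?_⟩
      · intro i hi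
        have := hkV.1
        simp only [Set.mem_iInter, Set.mem_preimage, Metric.mem_ball, Finset.mem_range] at this
        have := this i (Nat.lt_succ_of_le hi)
        rwa [Real.dist_eq] at this
      · have := hkV.2
        simp only [Set.mem_preimage, Metric.mem_ball] at this
        rwa [Real.dist_eq] at this
    choose f hfA hf1 hf2 using hchoice
    -- range f is infinite
    have hrange : (Set.range f).Infinite := by
      intro hfin
      obtain ⟨a, ha⟩ := exists_infinite_fiber_of_range_finite hfin
      have hall : ∀ i, |a.1 (y i) - g (y i)| < ε/4 := by
        intro i
        obtain ⟨n, hn, hgt⟩ := ha.exists_gt i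
        have := hf1 n i hgt.le
        rwa [hn] at this
      have ha0 : |a.1 x₀ - g x₀| < ε/4 := by
        obtain ⟨n, hn⟩ := ha.nonempty
        have := hf2 n
        rwa [hn] at this
      have hU : IsOpen (a.1 ⁻¹' Metric.ball (a.1 x₀) (ε/4)) :=
        a.2.isOpen_preimage _ Metric.isOpen_ball
      obtain ⟨z, hz1, i, rfl⟩ := mem_closure_iff.1 hx₀C _ hU (by simp [hε])
      rw [Set.mem_preimage, Metric.mem_ball, Real.dist_eq] at hz1
      have h1 := hfar i
      have h2 : |g (y i) - g x₀| ≤ |g (y i) - a.1 (y i)| + |a.1 (y i) - a.1 x₀| + |a.1 x₀ - g x₀| := by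
        calc |g (y i) - g x₀| ≤ |g (y i) - a.1 x₀| + |a.1 x₀ - g x₀| := abs_sub_le _ _ _
          _ ≤ |g (y i) - a.1 (y i)| + |a.1 (y i) - a.1 x₀| + |a.1 x₀ - g x₀| := by
              have := abs_sub_le (g (y i)) (a.1 (y i)) (a.1 x₀); linarith
      have e1 : |g (y i) - a.1 (y i)| = |a.1 (y i) - g (y i)| := abs_sub_comm _ _
      have e2 : |g x₀ - g (y i)| = |g (y i) - g x₀| := abs_sub_comm _ _
      linarith [hall i]
    obtain ⟨h, -, hl⟩ := hA (Set.range f) (Set.range_subset_iff.2 hfA) hrange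
    -- h is pointwise ε/4-close to g on the y i and at x₀
    have hclose : ∀ i, |h.1 (y i) - g (y i)| ≤ ε/4 := by
      intro i
      by_contra hc
      push_neg at hc
      set δ := |h.1 (y i) - g (y i)| - ε/4 with hδ
      have hδpos : 0 < δ := by simp [hδ]; linarith
      set W : Set (Cp X) := (fun k : Cp X => k.1 (y i)) ⁻¹' Metric.ball (h.1 (y i)) δ with hW
      have hWopen : IsOpen W := (cp_eval_cont (y i)).isOpen_preimage _ Metric.isOpen_ball
      obtain ⟨n, hn, hnW⟩ := exists_ge_mem hl hWopen (by simp [hW, hδpos]) i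
      rw [hW, Set.mem_preimage, Metric.mem_ball, Real.dist_eq] at hnW
      have := hf1 n i hn
      have htri : |h.1 (y i) - g (y i)| ≤ |h.1 (y i) - (f n).1 (y i)| + |(f n).1 (y i) - g (y i)| :=
        abs_sub_le _ _ _
      have e1 : |g (y i) - h.1 (y i)| = |h.1 (y i) - g (y i)| := abs_sub_comm _ _
      have e2 : |h.1 (y i) - (f n).1 (y i)| = |(f n).1 (y i) - h.1 (y i)| := abs_sub_comm _ _
      simp only [hδ] at hnW
      linarith
    have hclose0 : |h.1 x₀ - g x₀| ≤ ε/4 := by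
      by_contra hc
      push_neg at hc
      set δ := |h.1 x₀ - g x₀| - ε/4 with hδ
      have hδpos : 0 < δ := by simp [hδ]; linarith
      set W : Set (Cp X) := (fun k : Cp X => k.1 x₀) ⁻¹' Metric.ball (h.1 x₀) δ with hW
      have hWopen : IsOpen W := (cp_eval_cont x₀).isOpen_preimage _ Metric.isOpen_ball
      obtain ⟨n, hn, hnW⟩ := exists_ge_mem hl hWopen (by simp [hW, hδpos]) 0
      rw [hW, Set.mem_preimage, Metric.mem_ball, Real.dist_eq] at hnW
      have := hf2 n
      have htri : |h.1 x₀ - g x₀| ≤ |h.1 x₀ - (f n).1 x₀| + |(f n).1 x₀ - g x₀| :=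
        abs_sub_le _ _ _
      have e1 : |g x₀ - h.1 x₀| = |h.1 x₀ - g x₀| := abs_sub_comm _ _
      have e2 : |h.1 x₀ - (f n).1 x₀| = |(f n).1 x₀ - h.1 x₀| := abs_sub_comm _ _
      simp only [hδ] at hnW
      linarith
    -- h is continuous at x₀: contradiction
    have hU : IsOpen (h.1 ⁻¹' Metric.ball (h.1 x₀) (ε/4)) :=
      h.2.isOpen_preimage _ Metric.isOpen_ball
    obtain ⟨z, hz1, i, rfl⟩ := mem_closure_iff.1 hx₀C _ hU (by simp [hε])
    rw [Set.mem_preimage, Metric.mem_ball, Real.dist_eq] at hz1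
    have h1 := hfar i
    have h2 : |g (y i) - g x₀| ≤ |g (y i) - h.1 (y i)| + |h.1 (y i) - h.1 x₀| + |h.1 x₀ - g x₀| := by
      calc |g (y i) - g x₀| ≤ |g (y i) - h.1 x₀| + |h.1 x₀ - g x₀| := abs_sub_le _ _ _
        _ ≤ |g (y i) - h.1 (y i)| + |h.1 (y i) - h.1 x₀| + |h.1 x₀ - g x₀| := by
            have := abs_sub_le (g (y i)) (h.1 (y i)) (h.1 x₀); linarith
    have e1 : |g (y i) - h.1 (y i)| = |h.1 (y i) - g (y i)| := abs_sub_comm _ _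
    have e2 : |g x₀ - g (y i)| = |g (y i) - g x₀| := abs_sub_comm _ _
    linarith [hclose i]
  exact closure_mono (Set.image_mono (f := g) hCs) key


lemma cp_pointwise_bounded {X : Type*} [TopologicalSpace X]
    {A : Set (Cp X)} (hA : CountablyCompactIn A Set.univ) (x : X) :
    ∃ M : ℝ, ∀ f ∈ A, |(f : Cp X).1 x| ≤ M := by
  by_contra hcon
  push_neg at hcon
  choose f hfA hfx using fun n : ℕ => hcon n
  have hrange : (Set.range f).Infinite := by
    intro hfin
    obtain ⟨a, ha⟩ := exists_infinite_fiber_of_range_finite hfin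
    obtain ⟨n, hn, hgt⟩ := ha.exists_gt ⌈|a.1 x|⌉₊
    have h1 : ((n : ℕ) : ℝ) < |(f n).1 x| := hfx n
    rw [hn] at h1
    have h2 : |a.1 x| ≤ (⌈|a.1 x|⌉₊ : ℝ) := Nat.le_ceil _
    have h3 : ((⌈|a.1 x|⌉₊ : ℕ) : ℝ) < (n : ℝ) := by exact_mod_cast hgt
    linarith
  obtain ⟨h, -, hl⟩ := hA (Set.range f) (Set.range_subset_iff.2 hfA) hrange
  set W : Set (Cp X) := (fun k : Cp X => k.1 x) ⁻¹' Metric.ball (h.1 x) 1 with hW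
  have hWopen : IsOpen W := (cp_eval_cont x).isOpen_preimage _ Metric.isOpen_ball
  obtain ⟨n, hn, hnW⟩ := exists_ge_mem hl hWopen (by simp [hW]) ⌈|h.1 x| + 1⌉₊
  rw [hW, Set.mem_preimage, Metric.mem_ball, Real.dist_eq] at hnW
  have h1 : ((n : ℕ) : ℝ) < |(f n).1 x| := hfx n
  have h2 : |h.1 x| + 1 ≤ (⌈|h.1 x| + 1⌉₊ : ℝ) := Nat.le_ceil _
  have h3 : ((⌈|h.1 x| + 1⌉₊ : ℕ) : ℝ) ≤ (n : ℝ) := by exact_mod_cast hn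
  have h4 : |(f n).1 x| - |h.1 x| ≤ |(f n).1 x - h.1 x| := abs_sub_abs_le_abs_sub _ _
  linarith


/-- A countably tight completely regular Hausdorff space is weakly
Grothendieck: `Cp(X)` is a g-space. -/
theorem countablyTight_weaklyGrothendieck
    {X : Type*} [TopologicalSpace X] [CompletelyRegularSpace X] [T2Space X]
    (ht : CountablyTight X) : IsGSpace (Cp X) := by
  intro A hA
  classical
  have hemb : Topology.IsEmbedding (fun f : Cp X => (f.1 : X → ℝ)) :=
    Topology.IsEmbedding.subtypeVal
  set A' : Set (X → ℝ) := (fun f : Cp X => f.1) '' A with hA'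
  choose M hM using fun x => cp_pointwise_bounded hA x
  set K := closure A' with hK
  have hKsub : K ⊆ Set.univ.pi (fun x => Set.Icc (-(M x)) (M x)) := by
    apply closure_minimal
    · rintro _ ⟨F, hFA, rfl⟩ x _
      exact abs_le.1 (hM x F hFA)
    · exact isClosed_set_pi fun x _ => isClosed_Icc
  have hKcomp : IsCompact K :=
    (isCompact_univ_pi fun x => isCompact_Icc).of_isClosed_subset isClosed_closure hKsub
  have himg : (fun f : Cp X => f.1) '' closure A = K := by
    rw [hemb.closure_eq_preimage_closure_image A, Set.image_preimage_eq_inter_range]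
    apply Set.inter_eq_self_of_subset_left
    intro k hk
    exact ⟨⟨k, closure_subset_continuous ht hA hk⟩, rfl⟩
  rw [hemb.isCompact_iff, himg]
  exact hKcomp
end

section
/- Let X be a countably tight topological space and Z any topological space. A function f : X → Z is continuous if and only if for every countable subset T ⊆ X, the restriction of f to the closure cl(T) (with the subspace topology) is continuous. -/
open Set Filter Topology

/-- A map from a countably tight space is continuous iff its restriction to
the closure of every countable subset is continuous. -/
theorem continuous_iff_continuous_on_closure_of_countable
    {X Z : Type*} [TopologicalSpace X] [TopologicalSpace Z]
    (ht : CountablyTight X) (f : X → Z) :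
    Continuous f ↔
      ∀ T : Set X, T.Countable → Continuous ((closure T).restrict f) := by
  constructor
  · intro hf T _
    exact hf.comp continuous_subtype_val
  · intro h
    rw [continuous_iff_isClosed]
    intro C hC
    rw [← closure_subset_iff_isClosed]
    intro x hx
    obtain ⟨B, hBsub, hBc, hxB⟩ := ht _ x hx
    have hg : Continuous ((closure B).restrict f) := h B hBc
    have h1 : IsClosed (((closure B).restrict f) ⁻¹' C) := hC.preimage hg
    have h2 : (Subtype.val ⁻¹' B : Set (closure B)) ⊆ ((closure B).restrict f) ⁻¹' C := by
      intro y hy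
      exact hBsub hy
    have h3 : (⟨x, hxB⟩ : closure B) ∈ closure (Subtype.val ⁻¹' B : Set (closure B)) := by
      rw [closure_subtype]
      have : (Subtype.val '' (Subtype.val ⁻¹' B : Set (closure B))) = B := by
        apply Set.image_preimage_eq_of_subset
        simpa using subset_closure
      rw [this]; exact hxB
    exact (closure_minimal h2 h1) h3
end

section
/- Let X be a normal T1 (i.e., T4) topological space and let A ⊆ X be countably compact in X. Then the closure cl(A) is a countably compact space. -/
open Set Filter Topology

/-- In a normal T1 space, the closure of a set countably compact in `X` is a
countably compact space. -/
theorem closure_countablyCompact_of_normal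
    {X : Type*} [TopologicalSpace X] [NormalSpace X] [T1Space X]
    (A : Set X) (hA : CountablyCompactIn A (Set.univ : Set X)) :
    CountablyCompactSpace' (closure A) := by

  intro S hSinf
  by_contra hcon
  push_neg at hcon
  set T : Set X := Subtype.val '' S with hTdef
  have hTinf : T.Infinite := hSinf.image Subtype.val_injective.injOn
  have hTsub : T ⊆ closure A := by rintro _ ⟨⟨x, hx⟩, -, rfl⟩; exact hx
  -- T has no limit point in X
  have hT : ∀ x : X, ∃ U : Set X, IsOpen U ∧ x ∈ U ∧ (T ∩ U).Finite := by
    intro x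
    by_contra hxl
    push_neg at hxl
    have hlim : IsLimitPointOf x T := fun U hU hxU => hxl U hU hxU
    have hxA : x ∈ closure A := by
      rw [← closure_closure (s := A), mem_closure_iff]
      intro o ho hxo
      obtain ⟨t, ht⟩ := (hlim o ho hxo).nonempty
      exact ⟨t, ht.2, hTsub ht.1⟩
    apply hcon ⟨x, hxA⟩
    intro U hU hxU
    obtain ⟨V, hV, rfl⟩ := isOpen_induced_iff.mp hU
    have himg : T ∩ V = Subtype.val '' (S ∩ Subtype.val ⁻¹' V) := by
      rw [Set.image_inter_preimage]
    have := hlim V hV hxU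
    rw [himg] at this
    exact this.of_image
  -- enumerate an infinite subset of T
  let e : ℕ → X := fun n => (Set.Infinite.natEmbedding T hTinf n : X)
  have he_inj : Function.Injective e :=
    Subtype.val_injective.comp (Set.Infinite.natEmbedding T hTinf).injective
  have heT : ∀ n, e n ∈ T := fun n => (Set.Infinite.natEmbedding T hTinf n).2
  set D : Set X := Set.range e with hD
  have hDT : D ⊆ T := by rintro _ ⟨n, rfl⟩; exact heT n
  have hDfin : ∀ x : X, ∃ U : Set X, IsOpen U ∧ x ∈ U ∧ (D ∩ U).Finite := by
    intro x
    obtain ⟨U, hU, hxU, hfin⟩ := hT x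
    exact ⟨U, hU, hxU, hfin.subset (Set.inter_subset_inter_left _ hDT)⟩
  have hDclosed : IsClosed D := by
    rw [← isOpen_compl_iff, isOpen_iff_forall_mem_open]
    intro x hx
    obtain ⟨U, hU, hxU, hfin⟩ := hDfin x
    refine ⟨U \ (D ∩ U), ?_, hU.sdiff hfin.isClosed, ⟨hxU, fun h => hx h.1⟩⟩
    intro y hy hyD
    exact hy.2 ⟨hyD, hy.1⟩
  have hiso : ∀ n, ∃ U : Set X, IsOpen U ∧ e n ∈ U ∧ D ∩ U = {e n} := by
    intro n
    obtain ⟨U, hU, hxU, hfin⟩ := hDfin (e n)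
    refine ⟨U \ ((D ∩ U) \ {e n}), hU.sdiff ((hfin.subset Set.diff_subset).isClosed),
      ⟨hxU, fun h => h.2 rfl⟩, ?_⟩
    ext y
    constructor
    · rintro ⟨hyD, hyU, hy2⟩
      by_contra hne
      exact hy2 ⟨⟨hyD, hyU⟩, hne⟩
    · rintro rfl
      exact ⟨⟨n, rfl⟩, hxU, fun h => h.2 rfl⟩
  -- a continuous ℝ-valued function on D
  have hf_cont : Continuous fun p : ↥D => ((Function.invFun e p.1 : ℕ) : ℝ) := by
    rw [continuous_iff_continuousAt]
    rintro ⟨x, hx⟩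
    obtain ⟨n, rfl⟩ := hx
    obtain ⟨U, hU, hxU, hDU⟩ := hiso n
    have hopen : IsOpen ({(⟨e n, ⟨n, rfl⟩⟩ : ↥D)} : Set ↥D) := by
      rw [isOpen_induced_iff]
      refine ⟨U, hU, ?_⟩
      ext p
      simp only [Set.mem_preimage, Set.mem_singleton_iff]
      constructor
      · intro hp
        have : (p : X) ∈ D ∩ U := ⟨p.2, hp⟩
        rw [hDU] at this
        exact Subtype.ext this
      · rintro rfl
        exact hxU
    have hpure := isOpen_singleton_iff_nhds_eq_pure _ |>.mp hopen
    unfold ContinuousAt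
    rw [hpure]
    exact tendsto_pure_nhds _ _
  obtain ⟨g, hg⟩ := ContinuousMap.exists_restrict_eq (Y := ℝ) hDclosed
    ⟨fun p : ↥D => ((Function.invFun e p.1 : ℕ) : ℝ), hf_cont⟩
  have hg' : ∀ n : ℕ, g (e n) = n := by
    intro n
    have h1 := DFunLike.congr_fun hg (⟨e n, ⟨n, rfl⟩⟩ : ↥D)
    have h2 : Function.invFun e (e n) = n := Function.leftInverse_invFun he_inj n
    simpa [ContinuousMap.restrict, h2] using h1
  -- choose points of A close to each e n under g
  have hchoice : ∀ n : ℕ, ∃ aa ∈ A, |g aa - (n : ℝ)| < 1/2 := by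
    intro n
    have hopen : IsOpen (g ⁻¹' Metric.ball (n : ℝ) (1/2)) :=
      Metric.isOpen_ball.preimage g.continuous
    have hmem : e n ∈ g ⁻¹' Metric.ball (n : ℝ) (1/2) := by
      simp [Set.mem_preimage, Metric.mem_ball, hg' n]
    have hc := hTsub (heT n)
    rw [mem_closure_iff] at hc
    obtain ⟨y, hy1, hy2⟩ := hc _ hopen hmem
    refine ⟨y, hy2, ?_⟩
    simpa [Real.dist_eq] using hy1
  choose a haA hanear using hchoice
  have ha_inj : Function.Injective a := by
    intro m n h
    have hd : |(m : ℝ) - n| < 1 := by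
      calc |(m : ℝ) - n| ≤ |(m : ℝ) - g (a m)| + |g (a m) - n| := abs_sub_le _ _ _
        _ = |g (a m) - m| + |g (a n) - n| := by rw [abs_sub_comm, h]
        _ < 1/2 + 1/2 := add_lt_add (hanear m) (hanear n)
        _ = 1 := by norm_num
    have := abs_lt.mp hd
    have h1 : (m : ℝ) < n + 1 := by linarith [this.2]
    have h2 : (n : ℝ) < m + 1 := by linarith [this.1]
    have h1' : m < n + 1 := by exact_mod_cast h1
    have h2' : n < m + 1 := by exact_mod_cast h2
    omega
  obtain ⟨x, -, hxlim⟩ := hA (Set.range a) (Set.range_subset_iff.mpr haA)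
    (Set.infinite_range_of_injective ha_inj)
  have hUopen : IsOpen (g ⁻¹' Metric.ball (g x) 1) :=
    Metric.isOpen_ball.preimage g.continuous
  have hinf := hxlim _ hUopen (by simp [Set.mem_preimage, Metric.mem_ball])
  apply hinf
  refine Set.Finite.subset ((Set.finite_Iic ⌈g x + 2⌉₊).image a) ?_
  rintro y ⟨⟨n, rfl⟩, hyU⟩
  have hyU' : |g (a n) - g x| < 1 := by
    simpa [Set.mem_preimage, Real.dist_eq] using hyU
  have hb : (n : ℝ) ≤ g x + 2 := by
    have h3 : |(n : ℝ) - g x| ≤ |(n : ℝ) - g (a n)| + |g (a n) - g x| := abs_sub_le _ _ _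
    rw [abs_sub_comm (n : ℝ) (g (a n))] at h3
    have := (abs_lt.mp (lt_of_le_of_lt h3 (by linarith [hanear n, hyU'] :
      |g (a n) - (n : ℝ)| + |g (a n) - g x| < (3:ℝ)/2))).2
    linarith
  have hn : n ≤ ⌈g x + 2⌉₊ := by
    have := le_trans hb (Nat.le_ceil _)
    exact_mod_cast this
  exact ⟨n, hn, rfl⟩
end

section
/- Every countable completely regular Hausdorff space X is Grothendieck; that is, Cp(X) is a hereditary g-space: for every subspace Y of Cp(X), every subset A ⊆ Y that is countably compact in Y has compact closure in Y. -/
open Set Filter Topology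

theorem gspace_of_metrizable (Y : Type*) [TopologicalSpace Y]
    [TopologicalSpace.MetrizableSpace Y] : IsGSpace Y := by
  letI := TopologicalSpace.metrizableSpaceMetric Y
  intro A hA
  have hseq : IsSeqCompact (closure A) := by
    intro y hy
    have hex : ∀ n : ℕ, ∃ z ∈ A, dist (y n) z < 1 / (n + 1) := fun n =>
      Metric.mem_closure_iff.mp (hy n) _ (by positivity)
    choose a ha hd using hex
    by_cases hfin : (Set.range a).Finite
    · haveI : Finite ↥(Set.range a) := hfin
      obtain ⟨v, hv⟩ := Finite.exists_infinite_fiber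
        (fun n : ℕ => (⟨a n, Set.mem_range_self n⟩ : ↥(Set.range a)))
      have hvinf : {n : ℕ | a n = (v : Y)}.Infinite := by
        rw [← Set.infinite_coe_iff]
        refine Infinite.of_injective (fun m : ↥((fun n : ℕ =>
          (⟨a n, Set.mem_range_self n⟩ : ↥(Set.range a))) ⁻¹' {v}) =>
          (⟨m.1, by
            have h2 := m.2
            simp only [Set.mem_preimage, Set.mem_singleton_iff, Subtype.ext_iff] at h2
            exact h2⟩ :
            ↥{n : ℕ | a n = (v : Y)})) ?_
        intro m₁ m₂ h
        simpa [Subtype.ext_iff] using h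
      obtain ⟨φ, hφm, hφ⟩ := extraction_of_frequently_atTop
        (Nat.frequently_atTop_iff_infinite.mpr hvinf)
      obtain ⟨m, hm⟩ := v.2
      refine ⟨(v : Y), subset_closure (hm ▸ ha m), φ, hφm, ?_⟩
      rw [tendsto_iff_dist_tendsto_zero]
      apply squeeze_zero (fun k => dist_nonneg) (g := fun k : ℕ => 1 / (k + 1))
      · intro k
        rw [← hφ k]
        exact le_of_lt (lt_of_lt_of_le (hd (φ k))
          (by
            apply one_div_le_one_div_of_le (by positivity)
            have h5 : (k:ℝ) ≤ (φ k : ℝ) := Nat.cast_le.mpr hφm.le_apply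
            linarith))
      · exact tendsto_one_div_add_atTop_nhds_zero_nat
    · have hsub : Set.range a ⊆ A := Set.range_subset_iff.mpr ha
      obtain ⟨x, -, hx⟩ := hA (Set.range a) hsub hfin
      have hfreq : ∀ k : ℕ, ∃ᶠ n in atTop, dist (a n) x < 1 / (k + 1) := by
        intro k
        rw [Nat.frequently_atTop_iff_infinite]
        have hball := hx (Metric.ball x (1 / (k + 1))) Metric.isOpen_ball
          (Metric.mem_ball_self (by positivity))
        intro hcon
        apply hball
        have : Set.range a ∩ Metric.ball x (1 / (k + 1)) ⊆
            a '' {n | dist (a n) x < 1 / (k + 1)} := by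
          rintro z ⟨⟨n, rfl⟩, hz⟩
          exact ⟨n, by simpa [Metric.mem_ball] using hz, rfl⟩
        exact Set.Finite.subset (hcon.image a) this
      obtain ⟨φ, hφm, hφ⟩ := extraction_forall_of_frequently hfreq
      have hxcl : x ∈ closure A := by
        rw [Metric.mem_closure_iff]
        intro ε hε
        obtain ⟨k, hk⟩ := exists_nat_one_div_lt hε
        exact ⟨a (φ k), hsub (Set.mem_range_self _), by
          rw [dist_comm]; exact lt_trans (hφ k) hk⟩
      refine ⟨x, hxcl, φ, hφm, ?_⟩
      rw [tendsto_iff_dist_tendsto_zero]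
      apply squeeze_zero (fun k => dist_nonneg) (g := fun k : ℕ => 2 / (k + 1))
      · intro k
        have h1 : dist (y (φ k)) x ≤ dist (y (φ k)) (a (φ k)) + dist (a (φ k)) x :=
          dist_triangle _ _ _
        have h2 : dist (y (φ k)) (a (φ k)) < 1 / (φ k + 1) := hd (φ k)
        have h3 : (1 : ℝ) / (φ k + 1) ≤ 1 / (k + 1) := by
          apply one_div_le_one_div_of_le (by positivity)
          have h5 : (k:ℝ) ≤ (φ k : ℝ) := Nat.cast_le.mpr hφm.le_apply
          linarith
        have h4 : dist (a (φ k)) x < 1 / (k + 1) := hφ k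
        have heq : (y ∘ φ) k = y (φ k) := rfl
        rw [heq]
        have : (2 : ℝ) / (k + 1) = 1 / (k + 1) + 1 / (k + 1) := by ring
        rw [this]
        linarith
      · have : (fun k : ℕ => (2 : ℝ) / (k + 1)) = fun k : ℕ => 2 * (1 / ((k:ℝ) + 1)) := by
          funext k; ring
        rw [this]
        simpa using (tendsto_one_div_add_atTop_nhds_zero_nat.const_mul (2 : ℝ))
  exact hseq.isCompact


/-- Every countable completely regular Hausdorff space is Grothendieck:
`Cp(X)` is a hereditary g-space. -/
theorem countable_grothendieck
    {X : Type*} [TopologicalSpace X] [CompletelyRegularSpace X] [T2Space X]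
    [Countable X] : IsHereditaryGSpace (Cp X) := by
  haveI : TopologicalSpace.MetrizableSpace (Cp X) :=
    TopologicalSpace.MetrizableSpace.subtype {f : X → ℝ | Continuous f}
  intro B
  exact gspace_of_metrizable ↥B
end

section
/- Let X be a countably tight completely regular Hausdorff space and A ⊆ Cp(X,[0,1]). Then the closure of A in Cp(X,[0,1]) is compact if and only if DULC(A,X) holds. -/
open Set Filter Topology

/-- Continuity from the closure-image criterion. -/
lemma continuous_of_image_closure_subset {Y Z : Type*} [TopologicalSpace Y] [TopologicalSpace Z]
    {F : Y → Z} (h : ∀ s : Set Y, F '' closure s ⊆ closure (F '' s)) : Continuous F := by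
  rw [continuous_iff_isClosed]
  intro t htc
  have : closure (F ⁻¹' t) ⊆ F ⁻¹' t := by
    intro y hy
    have : F y ∈ closure (F '' (F ⁻¹' t)) := h _ ⟨y, hy, rfl⟩
    have : F y ∈ closure t := closure_mono (image_preimage_subset F t) this
    simpa [htc.closure_eq] using this
  exact isClosed_of_closure_subset this

/-- Every pointwise cluster point of a set satisfying DULC is continuous
(for countably tight `X`). -/
lemma continuous_of_mem_closure_DULC
    {X : Type*} [TopologicalSpace X] [T2Space X]
    (ht : CountablyTight X) {A : Set (CpI X)} (hD : DULC A)
    {F : X → unitInterval} (hF : F ∈ closure ((fun f : CpI X => f.1) '' A)) :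
    Continuous F := by
  apply continuous_of_image_closure_subset
  intro S
  rintro _ ⟨y, hy, rfl⟩
  obtain ⟨B, hBS, hBc, hyB⟩ := ht S y hy
  have hBne : B.Nonempty := by
    rcases B.eq_empty_or_nonempty with h | h
    · rw [h, closure_empty] at hyB; exact absurd hyB (notMem_empty y)
    · exact h
  obtain ⟨x, hx⟩ := hBc.exists_eq_range hBne
  -- ultrafilter 𝒱 along which x converges to y
  have hcomap : (Filter.comap x (𝓝 y)).NeBot := by
    rw [comap_neBot_iff]
    intro t htnhds
    obtain ⟨b, hbt, hbB⟩ := mem_closure_iff_nhds.mp hyB t htnhds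
    rw [hx] at hbB
    obtain ⟨m, rfl⟩ := hbB
    exact ⟨m, hbt⟩
  haveI := hcomap
  set 𝒱 : Ultrafilter ℕ := Ultrafilter.of (Filter.comap x (𝓝 y)) with h𝒱def
  have h𝒱 : Tendsto x (𝒱 : Filter ℕ) (𝓝 y) :=
    tendsto_comap.mono_left (Ultrafilter.of_le _)
  -- the countably many relevant points
  set z : ℕ → X := fun m => Nat.casesOn m y x with hz
  set Φ : (X → unitInterval) → (ℕ → unitInterval) := fun g m => g (z m) with hΦdef
  have hΦ : Continuous Φ := continuous_pi fun m => continuous_apply (z m)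
  have hΦF : Φ F ∈ closure (Φ '' ((fun f : CpI X => f.1) '' A)) :=
    image_closure_subset_closure_image hΦ ⟨F, hF, rfl⟩
  rw [Set.image_image] at hΦF
  obtain ⟨q, hqmem, hq⟩ := mem_closure_iff_seq_limit.mp hΦF
  choose f hfA hfq using hqmem
  have hpt : ∀ m, Tendsto (fun n => (f n).1 (z m)) atTop (𝓝 (F (z m))) := by
    intro m
    have h1 := (tendsto_pi_nhds.mp hq) m
    refine h1.congr fun n => ?_
    rw [← hfq n]
  -- ultrafilter 𝒰 extending atTop
  haveI : (atTop : Filter ℕ).NeBot := atTop_neBot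
  set 𝒰 : Ultrafilter ℕ := Ultrafilter.of atTop with h𝒰def
  have h𝒰le : (𝒰 : Filter ℕ) ≤ atTop := Ultrafilter.of_le _
  set gseq : ℕ → unitInterval := fun n => (f n).1 y with hgseq
  have hg : ∀ n, Tendsto (fun m => (f n).1 (x m)) (𝒱 : Filter ℕ) (𝓝 (gseq n)) :=
    fun n => ((f n).2.tendsto y).comp h𝒱
  have hu : Tendsto gseq (𝒰 : Filter ℕ) (𝓝 (F y)) := (hpt 0).mono_left h𝒰le
  set hseq : ℕ → unitInterval := fun m => F (x m) with hhseq
  have hh : ∀ m, Tendsto (fun n => (f n).1 (x m)) (𝒰 : Filter ℕ) (𝓝 (hseq m)) :=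
    fun m => (hpt (m + 1)).mono_left h𝒰le
  obtain ⟨v, -, hvle⟩ := isCompact_univ.ultrafilter_le_nhds (𝒱.map hseq)
    (by simp [le_principal_iff])
  have hv : Tendsto hseq (𝒱 : Filter ℕ) (𝓝 v) := hvle
  have key : F y = v := hD f hfA x 𝒰 𝒱 ⟨y, h𝒱⟩ gseq hseq (F y) v hg hu hh hv
  rw [key]
  exact mem_closure_of_tendsto hv (Filter.Eventually.of_forall fun m =>
    ⟨x m, hBS (hx ▸ mem_range_self m), rfl⟩)

/-- For countably tight `X`, a subset of `Cp(X,[0,1])` has compact closure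
iff the double ultralimit condition `DULC(A,X)` holds. -/
theorem relativelyCompact_iff_DULC_of_countablyTight
    {X : Type*} [TopologicalSpace X] [CompletelyRegularSpace X] [T2Space X]
    (ht : CountablyTight X) (A : Set (CpI X)) :
    IsCompact (closure A) ↔ DULC A := by
  set ι : CpI X → (X → unitInterval) := fun f => f.1 with hι
  have hemb : Topology.IsEmbedding ι :=
    Topology.IsEmbedding.subtypeVal (p := fun f : X → unitInterval => Continuous f)
  constructor
  · -- compact closure implies DULC
    intro hC
    rintro f hfA x 𝒰 𝒱 ⟨y, hy⟩ g h u v hg hu hh hv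
    obtain ⟨F, -, hle⟩ := hC.ultrafilter_le_nhds (𝒰.map f)
      (le_principal_iff.mpr (Filter.mem_map.mpr (Filter.univ_mem' fun n => subset_closure (hfA n))))
    have hFt : Tendsto f (𝒰 : Filter ℕ) (𝓝 F) := hle
    have hev : ∀ zpt : X, Tendsto (fun n => (f n).1 zpt) (𝒰 : Filter ℕ) (𝓝 (F.1 zpt)) := by
      intro zpt
      have hcont : Continuous (fun g : CpI X => g.1 zpt) :=
        (continuous_apply zpt).comp hemb.continuous
      exact (hcont.tendsto F).comp hFt
    have hhm : ∀ m, h m = F.1 (x m) := fun m => tendsto_nhds_unique (hh m) (hev (x m))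
    have hgn : ∀ n, g n = (f n).1 y :=
      fun n => tendsto_nhds_unique (hg n) (((f n).2.tendsto y).comp hy)
    have hu' : u = F.1 y :=
      tendsto_nhds_unique hu ((hev y).congr fun n => (hgn n).symm)
    have hv' : v = F.1 y :=
      tendsto_nhds_unique hv (((F.2.tendsto y).comp hy).congr fun m => (hhm m).symm)
    rw [hu', hv']
  · -- DULC implies compact closure
    intro hD
    have hsub : closure (ι '' A) ⊆ Set.range ι := by
      intro F hF
      exact ⟨⟨F, continuous_of_mem_closure_DULC ht hD hF⟩, rfl⟩
    have himg : ι '' closure A = closure (ι '' A) := by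
      rw [hemb.closure_eq_preimage_closure_image A,
        Set.image_preimage_eq_of_subset hsub]
    rw [hemb.isCompact_iff, himg]
    exact isClosed_closure.isCompact
end

section
/- Let X be a countably compact completely regular Hausdorff space and S ⊆ Cp(X,[0,1]). Then the following are equivalent: (I) the closure of S in Cp(X,[0,1]) is compact; (II) S is countably compact in Cp(X,[0,1]); (III) DLC(S,X) holds. -/
open Set Filter Topology

/-! ### Auxiliary lemmas -/

lemma aux_uf {Z : Type*} [TopologicalSpace Z] {A : Set Z}
    (hA : ∀ T ⊆ A, T.Infinite → ∃ x, IsLimitPointOf x T)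
    (a : ℕ → Z) (ha : ∀ n, a n ∈ A) :
    ∃ x, ∃ 𝒰 : Ultrafilter ℕ, (𝒰 : Filter ℕ) ≤ atTop ∧ Tendsto a 𝒰 (𝓝 x) := by
  by_cases hfin : (Set.range a).Finite
  · have hfib : ∃ y, (a ⁻¹' {y}).Infinite := by
      by_contra hcon
      push_neg at hcon
      have : (Set.univ : Set ℕ).Finite := by
        have : (Set.univ : Set ℕ) ⊆ ⋃ y ∈ Set.range a, a ⁻¹' {y} := by
          intro n _
          simp only [Set.mem_iUnion]
          exact ⟨a n, Set.mem_range_self n, rfl⟩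
        exact (hfin.biUnion fun y _ => hcon y).subset this
      exact Set.infinite_univ this
    obtain ⟨y, hy⟩ := hfib
    have hne : (atTop ⊓ 𝓟 (a ⁻¹' {y})).NeBot := by
      rw [inf_principal_neBot_iff]
      intro U hU
      obtain ⟨N, hN⟩ := mem_atTop_sets.1 hU
      obtain ⟨n, hn1, hn2⟩ := hy.exists_gt N
      exact ⟨n, hN n hn2.le, hn1⟩
    refine ⟨y, Ultrafilter.of (atTop ⊓ 𝓟 (a ⁻¹' {y})), (Ultrafilter.of_le _).trans inf_le_left, ?_⟩
    have hmem : a ⁻¹' {y} ∈ (Ultrafilter.of (atTop ⊓ 𝓟 (a ⁻¹' {y})) : Filter ℕ) :=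
      (Ultrafilter.of_le _) (le_principal_iff.1 inf_le_right)
    exact Tendsto.congr' (by filter_upwards [hmem] with n hn; exact (hn : a n = y).symm)
      tendsto_const_nhds
  · obtain ⟨x, hx⟩ := hA (Set.range a) (Set.range_subset_iff.2 ha) hfin
    have hcp : MapClusterPt x atTop a := by
      rw [mapClusterPt_iff_frequently]
      intro s hs
      obtain ⟨U, hUs, hUo, hxU⟩ := mem_nhds_iff.1 hs
      have hinf : {n | a n ∈ U}.Infinite := by
        intro hfin2
        have : (Set.range a ∩ U) ⊆ a '' {n | a n ∈ U} := by
          rintro y ⟨⟨n, rfl⟩, hyU⟩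
          exact ⟨n, hyU, rfl⟩
        exact hx U hUo hxU ((hfin2.image a).subset this)
      exact (Nat.frequently_atTop_iff_infinite.2 hinf).mono fun n hn => hUs hn
    obtain ⟨𝒰, h1, h2⟩ := mapClusterPt_iff_ultrafilter.1 hcp
    exact ⟨x, 𝒰, h1, h2⟩

lemma ccIn_of_compact {Z : Type*} [TopologicalSpace Z] {S : Set Z}
    (hc : IsCompact (closure S)) : CountablyCompactIn S (Set.univ : Set Z) := by
  intro T hTS hT
  set e := Set.Infinite.natEmbedding T hT with he
  set t : ℕ → Z := fun n => (e n : Z) with ht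
  have htT : ∀ n, t n ∈ T := fun n => (e n).2
  have hle : map t atTop ≤ 𝓟 (closure S) :=
    Filter.tendsto_principal.2 (Filter.Eventually.of_forall fun n => subset_closure (hTS (htT n)))
  obtain ⟨z, _, hcl⟩ := hc.exists_clusterPt hle
  refine ⟨z, Set.mem_univ z, fun U hU hzU => ?_⟩
  have hfreq : ∃ᶠ n in atTop, t n ∈ U :=
    (mapClusterPt_iff_frequently.1 hcl) U (hU.mem_nhds hzU)
  have hinf : {n | t n ∈ U}.Infinite := Nat.frequently_atTop_iff_infinite.1 hfreq
  have hinj : Function.Injective t := fun a b hab => e.injective (Subtype.val_injective hab)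
  refine ((hinf.image hinj.injOn).mono ?_)
  rintro y ⟨n, hn, rfl⟩
  exact ⟨htT n, hn⟩

lemma cpi_eval_cont {X : Type*} [TopologicalSpace X] (y : X) :
    Continuous (fun f : CpI X => f.1 y) :=
  (continuous_apply y).comp continuous_subtype_val

lemma dlc_of_ccIn {X : Type*} [TopologicalSpace X] (hX : CountablyCompactSpace' X)
    {S : Set (CpI X)} (hS : CountablyCompactIn S (Set.univ : Set (CpI X))) : DLC S := by
  intro f hf x g h u v hg hgu hh hhv
  obtain ⟨x₀, 𝒱, h𝒱le, h𝒱⟩ := aux_uf (A := (Set.univ : Set X))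
    (fun T _ hT => hX T hT) x (fun _ => Set.mem_univ _)
  obtain ⟨F, 𝒰, h𝒰le, h𝒰⟩ := aux_uf (A := S)
    (fun T hTS hT => (hS T hTS hT).imp (fun _ h' => h'.2)) f hf
  have hFx : ∀ y : X, Tendsto (fun n => (f n).1 y) 𝒰 (𝓝 (F.1 y)) :=
    fun y => (((cpi_eval_cont y).tendsto F).comp h𝒰)
  have hhm : ∀ m, h m = F.1 (x m) :=
    fun m => tendsto_nhds_unique ((hh m).mono_left h𝒰le) (hFx (x m))
  have hv : v = F.1 x₀ := by
    have h1 : Tendsto h 𝒱 (𝓝 (F.1 x₀)) := by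
      have : Tendsto (fun m => F.1 (x m)) 𝒱 (𝓝 (F.1 x₀)) := (F.2.tendsto x₀).comp h𝒱
      exact this.congr fun m => (hhm m).symm
    exact tendsto_nhds_unique (hhv.mono_left h𝒱le) h1
  have hgn : ∀ n, g n = (f n).1 x₀ :=
    fun n => tendsto_nhds_unique ((hg n).mono_left h𝒱le) (((f n).2.tendsto x₀).comp h𝒱)
  have hu : u = F.1 x₀ := by
    have h1 : Tendsto g 𝒰 (𝓝 (F.1 x₀)) := (hFx x₀).congr fun n => (hgn n).symm
    exact tendsto_nhds_unique (hgu.mono_left h𝒰le) h1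
  rw [hu, hv]

lemma tendsto_of_dist_aux {α : Type*} [PseudoMetricSpace α] {u : ℕ → α} {c : α}
    (h : ∀ᶠ n in atTop, dist (u n) c < 1/((n:ℝ)+1)) : Tendsto u atTop (𝓝 c) := by
  rw [tendsto_iff_dist_tendsto_zero]
  exact squeeze_zero' (Filter.Eventually.of_forall fun n => dist_nonneg)
    (h.mono fun n hn => hn.le) tendsto_one_div_add_atTop_nhds_zero_nat

noncomputable def buildSeq {α : Type*} (d : α) (next : ℕ → (ℕ → α) → α) : ℕ → ℕ → α
  | 0 => fun _ => d
  | (n+1) => fun k => if k = n then next n (buildSeq d next n) else buildSeq d next n k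

lemma compact_closure_of_dlc {X : Type*} [TopologicalSpace X] {S : Set (CpI X)}
    (hD : DLC S) : IsCompact (closure S) := by
  classical
  set A : Set (X → unitInterval) := Subtype.val '' S with hA
  have key : ∀ g ∈ closure A, Continuous g := by
    intro g hgcl
    have happ : ∀ (t : Finset X) (δ : ℝ), 0 < δ →
        ∃ fS ∈ S, ∀ y ∈ t, dist (fS.1 y) (g y) < δ := by
      intro t δ hδ
      have hU : ∀ᶠ h : X → unitInterval in 𝓝 g, ∀ y ∈ t, dist (h y) (g y) < δ := by
        rw [Filter.eventually_all_finset]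
        intro y _
        exact Metric.tendsto_nhds.1 ((continuous_apply y).tendsto g) δ hδ
      obtain ⟨a, haU, haA⟩ := mem_closure_iff_nhds.1 hgcl _ hU
      obtain ⟨fS, hfS, rfl⟩ := haA
      exact ⟨fS, hfS, haU⟩
    by_contra hgc
    rw [continuous_iff_continuousAt] at hgc
    push_neg at hgc
    obtain ⟨p, hp⟩ := hgc
    rw [ContinuousAt, Metric.tendsto_nhds] at hp
    push_neg at hp
    obtain ⟨ε, hε, hfreq⟩ := hp
    have step : ∀ (n : ℕ) (hist : ℕ → CpI X × X),
        ∃ q : CpI X × X, q.1 ∈ S ∧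
          dist (q.1.1 p) (g p) < 1/((n:ℝ)+1) ∧
          (∀ i < n, dist (q.1.1 (hist i).2) (g (hist i).2) < 1/((n:ℝ)+1)) ∧
          (∀ i < n, dist ((hist i).1.1 q.2) ((hist i).1.1 p) < 1/((n:ℝ)+1)) ∧
          dist (q.1.1 q.2) (q.1.1 p) < 1/((n:ℝ)+1) ∧
          ε ≤ dist (g q.2) (g p) := by
      intro n hist
      have hδ : 0 < 1/((n:ℝ)+1) := by positivity
      obtain ⟨fS, hfS, hfSapp⟩ :=
        happ (insert p ((Finset.range n).image fun i => (hist i).2)) _ hδ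
      have hUnb : ∀ᶠ y in 𝓝 p, dist (fS.1 y) (fS.1 p) < 1/((n:ℝ)+1) ∧
          ∀ i < n, dist ((hist i).1.1 y) ((hist i).1.1 p) < 1/((n:ℝ)+1) := by
        refine (Metric.tendsto_nhds.1 (fS.2.tendsto p) _ hδ).and ?_
        have h2 : ∀ᶠ y in 𝓝 p, ∀ i ∈ Finset.range n,
            dist ((hist i).1.1 y) ((hist i).1.1 p) < 1/((n:ℝ)+1) := by
          rw [Filter.eventually_all_finset]
          exact fun i _ => Metric.tendsto_nhds.1 ((hist i).1.2.tendsto p) _ hδ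
        exact h2.mono fun y hy i hi => hy i (Finset.mem_range.2 hi)
      obtain ⟨y, hy1, hy2, hy3⟩ := (hfreq.and_eventually hUnb).exists
      refine ⟨(fS, y), hfS, hfSapp p (Finset.mem_insert_self _ _), ?_, hy3, hy2, hy1⟩
      intro i hi
      exact hfSapp _ (Finset.mem_insert_of_mem
        (Finset.mem_image.2 ⟨i, Finset.mem_range.2 hi, rfl⟩))
    choose next hnext using step
    let d : CpI X × X := (⟨fun _ => g p, continuous_const⟩, p)
    set hseq : ℕ → ℕ → CpI X × X := buildSeq d next with hhseq
    set pr : ℕ → CpI X × X := fun n => next n (hseq n) with hpr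
    have hstab : ∀ m n, n < m → hseq m n = pr n := by
      intro m
      induction m with
      | zero => exact fun n hn => absurd hn (Nat.not_lt_zero n)
      | succ m ih =>
        intro n hn
        rcases Nat.lt_succ_iff_lt_or_eq.1 hn with h | h
        · have heq : hseq (m+1) n = hseq m n := by
            rw [hhseq]
            show (if n = m then _ else buildSeq d next m n) = buildSeq d next m n
            rw [if_neg (Nat.ne_of_lt h)]
          rw [heq]
          exact ih n h
        · subst h
          show (if n = n then next n (buildSeq d next n) else buildSeq d next n n) = pr n
          rw [if_pos rfl]
    set f : ℕ → CpI X := fun n => (pr n).1 with hf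
    set x : ℕ → X := fun n => (pr n).2 with hx
    have hfS : ∀ n, f n ∈ S := fun n => (hnext n (hseq n)).1
    have hp' : ∀ n, dist ((f n).1 p) (g p) < 1/((n:ℝ)+1) := fun n => (hnext n (hseq n)).2.1
    have hc : ∀ m n, m < n → dist ((f n).1 (x m)) (g (x m)) < 1/((n:ℝ)+1) := by
      intro m n hmn
      have := (hnext n (hseq n)).2.2.1 m hmn
      rwa [hstab n m hmn] at this
    have ha : ∀ i n, i ≤ n → dist ((f i).1 (x n)) ((f i).1 p) < 1/((n:ℝ)+1) := by
      intro i n hin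
      rcases lt_or_eq_of_le hin with h | h
      · have := (hnext n (hseq n)).2.2.2.1 i h
        rwa [hstab n i h] at this
      · subst h
        exact (hnext i (hseq i)).2.2.2.2.1
    have hb : ∀ n, ε ≤ dist (g (x n)) (g p) := fun n => (hnext n (hseq n)).2.2.2.2.2
    have h1 : ∀ i, Tendsto (fun n => (f i).1 (x n)) atTop (𝓝 ((f i).1 p)) := fun i =>
      tendsto_of_dist_aux ((eventually_ge_atTop i).mono fun n hn => ha i n hn)
    have h2 : ∀ m, Tendsto (fun n => (f n).1 (x m)) atTop (𝓝 (g (x m))) := fun m =>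
      tendsto_of_dist_aux ((eventually_gt_atTop m).mono fun n hn => hc m n hn)
    have h3 : Tendsto (fun n => (f n).1 p) atTop (𝓝 (g p)) :=
      tendsto_of_dist_aux (Filter.Eventually.of_forall hp')
    obtain ⟨L, -, φ, hφ, hLtend⟩ :=
      isCompact_univ.tendsto_subseq (fun m => Set.mem_univ (g (x m)))
    have hgpL : g p = L := by
      refine hD f hfS (fun m => x (φ m)) (fun n => (f n).1 p) (fun m => g (x (φ m)))
        (g p) L (fun n => (h1 n).comp hφ.tendsto_atTop) h3 (fun m => h2 (φ m)) hLtend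
    have hdist : Tendsto (fun m => dist (g (x (φ m))) (g p)) atTop (𝓝 (dist L (g p))) :=
      hLtend.dist tendsto_const_nhds
    have : ε ≤ dist L (g p) := ge_of_tendsto' hdist (fun m => hb (φ m))
    rw [← hgpL, dist_self] at this
    linarith
  have hcl_sub : Subtype.val '' (closure S) = closure A := by
    ext y
    constructor
    · rintro ⟨F, hF, rfl⟩
      exact closure_subtype.1 hF
    · intro hy
      exact ⟨Subtype.mk y (key y hy), closure_subtype.2 hy, rfl⟩
  have hsub := (Subtype.isCompact_iff (p := fun f : X → unitInterval => Continuous f) (s := closure S)).2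
  exact hsub (by have h := (isClosed_closure (s := A)).isCompact; rw [← hcl_sub] at h; exact h)


/-- For countably compact `X` and `S ⊆ Cp(X,[0,1])`:
(I) `closure S` compact, (II) `S` countably compact in `Cp(X,[0,1])`, and
(III) `DLC(S,X)` are equivalent. -/
theorem countablyCompact_compact_iff_countablyCompactIn_iff_DLC
    {X : Type*} [TopologicalSpace X] [CompletelyRegularSpace X] [T2Space X]
    (hX : CountablyCompactSpace' X) (S : Set (CpI X)) :
    (IsCompact (closure S) ↔ CountablyCompactIn S (Set.univ : Set (CpI X))) ∧
    (CountablyCompactIn S (Set.univ : Set (CpI X)) ↔ DLC S) := by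
  refine ⟨⟨fun h1 => ccIn_of_compact h1, fun h2 => compact_closure_of_dlc (dlc_of_ccIn hX h2)⟩,
    ⟨fun h2 => dlc_of_ccIn hX h2, fun h3 => ccIn_of_compact (compact_closure_of_dlc h3)⟩⟩
end

section
/- Every completely regular Hausdorff k-space X is weakly Grothendieck; that is, Cp(X) is a g-space: every subset A of Cp(X) that is countably compact in Cp(X) has compact closure in Cp(X). -/
open Set Filter Topology

section Aux

lemma hist_choice {α : Type*} [Nonempty α] (P : ℕ → (ℕ → α) → α → Prop)
    (trunc : ∀ n (s t : ℕ → α), (∀ j < n, s j = t j) → ∀ a, P n s a → P n t a)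
    (hex : ∀ n s, ∃ a, P n s a) :
    ∃ u : ℕ → α, ∀ n, P n u (u n) := by
  classical
  let step : (ℕ → α) → ℕ → α := fun s n => Classical.choose (hex n s)
  let H : ℕ → (ℕ → α) := fun n => Nat.rec (fun _ => Classical.arbitrary α)
    (fun m Hm => Function.update Hm m (step Hm m)) n
  have hH : ∀ m, H (m + 1) = Function.update (H m) m (step (H m) m) := fun m => rfl
  set u : ℕ → α := fun n => H (n + 1) n with hu
  have key : ∀ m n, n < m → H m n = u n := by
    intro m
    induction m with
    | zero => omega
    | succ m ih =>
      intro n hn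
      rcases Nat.lt_succ_iff_lt_or_eq.mp hn with h | h
      · rw [hH m, Function.update_of_ne (by omega)]
        exact ih n h
      · subst h; rfl
  refine ⟨u, fun n => ?_⟩
  have h1 : u n = step (H n) n := by
    show H (n+1) n = _
    rw [hH n, Function.update_self]
  have h2 : P n (H n) (u n) := h1 ▸ Classical.choose_spec (hex n (H n))
  exact trunc n (H n) u (fun j hj => key n j hj) _ h2

lemma eq_of_abs_lt_all {a b : ℝ} (h : ∀ δ : ℝ, 0 < δ → |a - b| < δ) : a = b := by
  by_contra hne
  exact lt_irrefl _ (h _ (abs_pos.mpr (sub_ne_zero.mpr hne)))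

lemma one_div_succ_le {n N : ℕ} (h : N ≤ n) : (1:ℝ)/((n:ℝ)+1) ≤ 1/((N:ℝ)+1) :=
  one_div_le_one_div_of_le (by positivity) (by exact_mod_cast Nat.succ_le_succ h)

lemma one_div_succ_pos (n : ℕ) : (0:ℝ) < 1/((n:ℝ)+1) := by positivity

lemma cp_eval_continuous {X : Type*} [TopologicalSpace X] (z : X) :
    Continuous (fun φ : Cp X => φ.1 z) :=
  (continuous_apply z).comp continuous_subtype_val

lemma cp_ball_open {X : Type*} [TopologicalSpace X] (z : X) (c δ : ℝ) :
    IsOpen {φ : Cp X | |φ.1 z - c| < δ} := by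
  have : {φ : Cp X | |φ.1 z - c| < δ} = (fun φ : Cp X => φ.1 z) ⁻¹' Metric.ball c δ := by
    ext φ; simp [Metric.mem_ball, Real.dist_eq]
  rw [this]
  exact Metric.isOpen_ball.preimage (cp_eval_continuous z)

lemma pi_ball_open (X : Type*) [TopologicalSpace X] (z : X) (c δ : ℝ) :
    IsOpen {ψ : X → ℝ | |ψ z - c| < δ} := by
  have : {ψ : X → ℝ | |ψ z - c| < δ} = (fun ψ : X → ℝ => ψ z) ⁻¹' Metric.ball c δ := by
    ext ψ; simp [Metric.mem_ball, Real.dist_eq]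
  rw [this]
  exact Metric.isOpen_ball.preimage (continuous_apply z)

lemma grothendieck_on {X : Type*} [TopologicalSpace X] {A : Set (Cp X)}
    (hA : CountablyCompactIn A univ) {g : X → ℝ}
    (hg : g ∈ closure (Subtype.val '' A)) {K : Set X} (hK : IsCompact K) :
    ContinuousOn g K := by
  classical
  intro x hxK
  by_contra hc
  rw [ContinuousWithinAt, Metric.tendsto_nhds] at hc
  push_neg at hc
  obtain ⟨ε, εpos, hfr⟩ := hc
  have hdisc : ∀ u : Set X, IsOpen u → x ∈ u → ∃ y, y ∈ u ∩ K ∧ ε ≤ |g y - g x| := by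
    intro u hu hxu
    have hev : ∀ᶠ y in 𝓝[K] x, y ∈ u ∩ K :=
      inter_mem (nhdsWithin_le_nhds (hu.mem_nhds hxu)) self_mem_nhdsWithin
    obtain ⟨y, hy1, hy2⟩ := (hfr.and_eventually hev).exists
    exact ⟨y, hy2, by rwa [Real.dist_eq] at hy1⟩
  have hgf : ∀ (n : ℕ) (xs : ℕ → X), ∃ φ : Cp X, φ ∈ A ∧ |φ.1 x - g x| < 1/((n:ℝ)+1) ∧
      ∀ j < n, |φ.1 (xs j) - g (xs j)| < 1/((n:ℝ)+1) := by
    intro n xs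
    have hUo : IsOpen ({ψ : X → ℝ | |ψ x - g x| < 1/((n:ℝ)+1)} ∩
        ⋂ j : Fin n, {ψ : X → ℝ | |ψ (xs j) - g (xs j)| < 1/((n:ℝ)+1)}) :=
      (pi_ball_open X x (g x) _).inter
        (isOpen_iInter_of_finite fun j => pi_ball_open X (xs j) (g (xs j)) _)
    have hgU : g ∈ ({ψ : X → ℝ | |ψ x - g x| < 1/((n:ℝ)+1)} ∩
        ⋂ j : Fin n, {ψ : X → ℝ | |ψ (xs j) - g (xs j)| < 1/((n:ℝ)+1)}) := by
      refine ⟨?_, mem_iInter.mpr fun j => ?_⟩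
      · show |g x - g x| < _
        rw [sub_self, abs_zero]; exact one_div_succ_pos n
      · show |g (xs j) - g (xs j)| < _
        rw [sub_self, abs_zero]; exact one_div_succ_pos n
    obtain ⟨ψ, hψU, hψA⟩ := mem_closure_iff.mp hg _ hUo hgU
    obtain ⟨φ, hφA, rfl⟩ := hψA
    exact ⟨φ, hφA, hψU.1, fun j hj => mem_iInter.mp hψU.2 ⟨j, hj⟩⟩
  haveI : Nonempty (Cp X × X) := ⟨⟨fun _ => 0, continuous_const⟩, x⟩
  obtain ⟨u, hu⟩ := hist_choice (α := Cp X × X)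
    (fun (n : ℕ) (s : ℕ → Cp X × X) (a : Cp X × X) => a.1 ∈ A ∧
      |a.1.1 x - g x| < 1/((n:ℝ)+1) ∧
      (∀ j < n, |a.1.1 ((s j).2) - g ((s j).2)| < 1/((n:ℝ)+1)) ∧
      a.2 ∈ K ∧ ε ≤ |g a.2 - g x| ∧
      ∀ j < n, |((s j).1).1 a.2 - ((s j).1).1 x| < 1/((n:ℝ)+1))
    (by
      rintro n s t hst a ⟨h1, h2, h3, h4, h5, h6⟩
      refine ⟨h1, h2, fun j hj => ?_, h4, h5, fun j hj => ?_⟩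
      · rw [← hst j hj]; exact h3 j hj
      · rw [← hst j hj]; exact h6 j hj)
    (by
      intro n s
      obtain ⟨φ, hφA, hφx, hφxs⟩ := hgf n (fun j => (s j).2)
      have hVo : IsOpen (⋂ j : Fin n,
          {z : X | |((s j).1).1 z - ((s j).1).1 x| < 1/((n:ℝ)+1)}) := by
        refine isOpen_iInter_of_finite fun j => ?_
        have : {z : X | |((s j).1).1 z - ((s j).1).1 x| < 1/((n:ℝ)+1)}
            = ((s j).1).1 ⁻¹' Metric.ball (((s j).1).1 x) (1/((n:ℝ)+1)) := by
          ext z; simp [Metric.mem_ball, Real.dist_eq]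
        rw [this]; exact Metric.isOpen_ball.preimage ((s j).1).2
      have hxV : x ∈ ⋂ j : Fin n,
          {z : X | |((s j).1).1 z - ((s j).1).1 x| < 1/((n:ℝ)+1)} := by
        refine mem_iInter.mpr fun j => ?_
        show |((s j).1).1 x - ((s j).1).1 x| < _
        rw [sub_self, abs_zero]; exact one_div_succ_pos n
      obtain ⟨y, ⟨hyV, hyK⟩, hyg⟩ := hdisc _ hVo hxV
      exact ⟨(φ, y), hφA, hφx, hφxs, hyK, hyg,
        fun j hj => mem_iInter.mp hyV ⟨j, hj⟩⟩)
  set f : ℕ → Cp X := fun n => (u n).1 with hf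
  set xs : ℕ → X := fun n => (u n).2 with hxs
  have P1 : ∀ n, f n ∈ A := fun n => (hu n).1
  have P2 : ∀ n, |(f n).1 x - g x| < 1/((n:ℝ)+1) := fun n => (hu n).2.1
  have P3 : ∀ n, ∀ j < n, |(f n).1 (xs j) - g (xs j)| < 1/((n:ℝ)+1) := fun n => (hu n).2.2.1
  have P4 : ∀ n, xs n ∈ K := fun n => (hu n).2.2.2.1
  have P5 : ∀ n, ε ≤ |g (xs n) - g x| := fun n => (hu n).2.2.2.2.1
  have P6 : ∀ n, ∀ j < n, |(f j).1 (xs n) - (f j).1 x| < 1/((n:ℝ)+1) :=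
    fun n => (hu n).2.2.2.2.2
  obtain ⟨y, hyK, hy⟩ := hK.exists_clusterPt (f := Filter.map xs atTop)
    (le_principal_iff.mpr (Filter.Eventually.of_forall P4 : ∀ᶠ n in atTop, xs n ∈ K))
  have hfreq : ∀ s ∈ 𝓝 y, ∃ᶠ m in atTop, xs m ∈ s := fun s hs => (mapClusterPt_iff_frequently.mp hy) s hs
  have claim1 : ∀ j, (f j).1 y = (f j).1 x := by
    intro j
    by_contra hne
    set d := |(f j).1 y - (f j).1 x| with hd
    have dpos : 0 < d := abs_pos.mpr (sub_ne_zero.mpr hne)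
    have hcts : {z : X | |(f j).1 z - (f j).1 y| < d/2} ∈ 𝓝 y := by
      have hpre := ((f j).2.continuousAt (x := y)).preimage_mem_nhds
        (Metric.ball_mem_nhds ((f j).1 y) (by linarith : (0:ℝ) < d/2))
      have : (f j).1 ⁻¹' Metric.ball ((f j).1 y) (d/2)
          = {z : X | |(f j).1 z - (f j).1 y| < d/2} := by
        ext z; simp [Metric.mem_ball, Real.dist_eq]
      rwa [this] at hpre
    have hev : ∀ᶠ m in atTop, |(f j).1 (xs m) - (f j).1 x| < d/2 := by
      obtain ⟨N0, hN0⟩ := exists_nat_one_div_lt (show (0:ℝ) < d/2 by linarith)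
      rw [eventually_atTop]
      refine ⟨max N0 (j+1), fun m hm => ?_⟩
      have hjm : j < m := lt_of_lt_of_le (by omega) (le_trans (le_max_right _ _) hm)
      calc |(f j).1 (xs m) - (f j).1 x| < 1/((m:ℝ)+1) := P6 m j hjm
        _ ≤ 1/((N0:ℝ)+1) := one_div_succ_le (le_trans (le_max_left _ _) hm)
        _ < d/2 := hN0
    obtain ⟨m, hm1, hm2⟩ := ((hfreq _ hcts).and_eventually hev).exists
    simp only [Set.mem_setOf_eq] at hm1
    rw [abs_sub_comm] at hm1
    have htri : d ≤ |(f j).1 y - (f j).1 (xs m)| + |(f j).1 (xs m) - (f j).1 x| :=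
      abs_sub_le _ _ _
    linarith
  have key2 : ∃ h : Cp X, ∀ (z₁ z₂ : X) (δ : ℝ), 0 < δ → ∀ N : ℕ,
      ∃ n, N ≤ n ∧ |(f n).1 z₁ - h.1 z₁| < δ ∧ |(f n).1 z₂ - h.1 z₂| < δ := by
    by_cases hinf : (Set.range f).Infinite
    · obtain ⟨h, -, hlim⟩ := hA (Set.range f) (range_subset_iff.mpr P1) hinf
      refine ⟨h, fun z₁ z₂ δ hδ N => ?_⟩
      have hUo : IsOpen ({φ : Cp X | |φ.1 z₁ - h.1 z₁| < δ} ∩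
          {φ : Cp X | |φ.1 z₂ - h.1 z₂| < δ}) :=
        (cp_ball_open z₁ _ δ).inter (cp_ball_open z₂ _ δ)
      have hhU : h ∈ ({φ : Cp X | |φ.1 z₁ - h.1 z₁| < δ} ∩
          {φ : Cp X | |φ.1 z₂ - h.1 z₂| < δ}) := by
        constructor
        · show |h.1 z₁ - h.1 z₁| < δ; rw [sub_self, abs_zero]; exact hδ
        · show |h.1 z₂ - h.1 z₂| < δ; rw [sub_self, abs_zero]; exact hδ
      have hSU := hlim _ hUo hhU
      by_contra hno
      push_neg at hno
      apply hSU
      refine Set.Finite.subset ((Set.finite_Iio N).image f) ?_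
      rintro φ ⟨⟨n, rfl⟩, hφU⟩
      by_cases hn : n < N
      · exact ⟨n, hn, rfl⟩
      · exact absurd hφU.2 (not_lt.mpr (hno n (le_of_not_gt hn) hφU.1))
    · rw [Set.not_infinite] at hinf
      have hfib : ∃ φ : Cp X, (f ⁻¹' {φ}).Infinite := by
        by_contra hno
        push_neg at hno
        have hcov : (Set.univ : Set ℕ) ⊆ ⋃ φ ∈ Set.range f, f ⁻¹' {φ} := by
          intro n _
          exact Set.mem_biUnion ⟨n, rfl⟩ rfl
        exact Set.infinite_univ (Set.Finite.subset (Set.Finite.biUnion hinf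
          (fun φ _ => hno φ)) hcov)
      obtain ⟨φ, hφinf⟩ := hfib
      refine ⟨φ, fun z₁ z₂ δ hδ N => ?_⟩
      obtain ⟨n, hn, hnN⟩ := hφinf.exists_gt N
      have hfn : f n = φ := hn
      refine ⟨n, le_of_lt hnN, ?_, ?_⟩
      · rw [hfn, sub_self, abs_zero]; exact hδ
      · rw [hfn, sub_self, abs_zero]; exact hδ
  obtain ⟨h, hkey⟩ := key2
  have hy1 : ∀ j, h.1 (xs j) = g (xs j) := by
    intro j
    apply eq_of_abs_lt_all
    intro δ hδ
    obtain ⟨N0, hN0⟩ := exists_nat_one_div_lt (show (0:ℝ) < δ/2 by linarith)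
    obtain ⟨n, hn, hc1, -⟩ := hkey (xs j) (xs j) (δ/2) (by linarith) (max N0 (j+1))
    have hjn : j < n := lt_of_lt_of_le (by omega) (le_trans (le_max_right _ _) hn)
    have h3 : |(f n).1 (xs j) - g (xs j)| < δ/2 :=
      calc |(f n).1 (xs j) - g (xs j)| < 1/((n:ℝ)+1) := P3 n j hjn
        _ ≤ 1/((N0:ℝ)+1) := one_div_succ_le (le_trans (le_max_left _ _) hn)
        _ < δ/2 := hN0
    calc |h.1 (xs j) - g (xs j)| ≤ |h.1 (xs j) - (f n).1 (xs j)| + |(f n).1 (xs j) - g (xs j)| :=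
          abs_sub_le _ _ _
      _ < δ/2 + δ/2 := by rw [abs_sub_comm] at hc1; exact add_lt_add hc1 h3
      _ = δ := by ring
  have hy2 : h.1 x = g x := by
    apply eq_of_abs_lt_all
    intro δ hδ
    obtain ⟨N0, hN0⟩ := exists_nat_one_div_lt (show (0:ℝ) < δ/2 by linarith)
    obtain ⟨n, hn, hc1, -⟩ := hkey x x (δ/2) (by linarith) N0
    have h3 : |(f n).1 x - g x| < δ/2 :=
      calc |(f n).1 x - g x| < 1/((n:ℝ)+1) := P2 n
        _ ≤ 1/((N0:ℝ)+1) := one_div_succ_le hn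
        _ < δ/2 := hN0
    calc |h.1 x - g x| ≤ |h.1 x - (f n).1 x| + |(f n).1 x - g x| := abs_sub_le _ _ _
      _ < δ/2 + δ/2 := by rw [abs_sub_comm] at hc1; exact add_lt_add hc1 h3
      _ = δ := by ring
  have hy3 : h.1 y = h.1 x := by
    apply eq_of_abs_lt_all
    intro δ hδ
    obtain ⟨n, -, hc1, hc2⟩ := hkey y x (δ/2) (by linarith) 0
    have hyx := claim1 n
    calc |h.1 y - h.1 x| ≤ |h.1 y - (f n).1 y| + |(f n).1 y - h.1 x| := abs_sub_le _ _ _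
      _ = |h.1 y - (f n).1 y| + |(f n).1 x - h.1 x| := by rw [hyx]
      _ < δ/2 + δ/2 := by rw [abs_sub_comm] at hc1; exact add_lt_add hc1 hc2
      _ = δ := by ring
  have hcts : {z : X | |h.1 z - h.1 y| < ε} ∈ 𝓝 y := by
    have hpre := (h.2.continuousAt (x := y)).preimage_mem_nhds
      (Metric.ball_mem_nhds (h.1 y) εpos)
    have : h.1 ⁻¹' Metric.ball (h.1 y) ε = {z : X | |h.1 z - h.1 y| < ε} := by
      ext z; simp [Metric.mem_ball, Real.dist_eq]
    rwa [this] at hpre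
  obtain ⟨m, hm⟩ := (hfreq _ hcts).exists
  simp only [Set.mem_setOf_eq] at hm
  rw [hy1 m, hy3, hy2] at hm
  exact absurd hm (not_lt.mpr (P5 m))

lemma cp_bound {X : Type*} [TopologicalSpace X] {A : Set (Cp X)}
    (hA : CountablyCompactIn A univ) (z : X) : ∃ M : ℝ, ∀ φ ∈ A, |(φ : Cp X).1 z| ≤ M := by
  by_contra hno
  push_neg at hno
  have h' : ∀ n : ℕ, ∃ φ ∈ A, (n:ℝ) < |(φ : Cp X).1 z| := fun n => hno n
  choose F hFA hF using h'
  have hinf : (Set.range F).Infinite := by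
    intro hfin
    obtain ⟨B, hB⟩ := (hfin.image (fun φ : Cp X => |φ.1 z|)).bddAbove
    obtain ⟨n, hn⟩ := exists_nat_gt B
    have h1 : |(F n).1 z| ≤ B := hB ⟨F n, ⟨n, rfl⟩, rfl⟩
    have h2 := hF n
    linarith
  obtain ⟨h, -, hlim⟩ := hA (Set.range F) (range_subset_iff.mpr hFA) hinf
  have hhU : h ∈ {φ : Cp X | |φ.1 z - h.1 z| < 1} := by
    show |h.1 z - h.1 z| < 1
    rw [sub_self, abs_zero]; norm_num
  have hinf2 := hlim _ (cp_ball_open z (h.1 z) 1) hhU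
  apply hinf2
  obtain ⟨N, hN⟩ := exists_nat_gt (|h.1 z| + 1)
  refine Set.Finite.subset ((Set.finite_Iio N).image F) ?_
  rintro φ ⟨⟨n, rfl⟩, hφU⟩
  refine ⟨n, ?_, rfl⟩
  have h1 : |(F n).1 z - h.1 z| < 1 := hφU
  have h2 := hF n
  have h3 : |(F n).1 z| - |h.1 z| ≤ |(F n).1 z - h.1 z| := abs_sub_abs_le_abs_sub _ _
  have : (n:ℝ) < N := by linarith
  exact_mod_cast this

end Aux

/-- A k-space: a set is closed iff its intersection with each compact subspace is closed
in that subspace. -/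
def IsKSpace (X : Type*) [TopologicalSpace X] : Prop :=
  ∀ Y : Set X, IsClosed Y ↔
    ∀ K : Set X, IsCompact K → IsClosed ((↑·) ⁻¹' Y : Set K)

/-- Every completely regular Hausdorff k-space is weakly Grothendieck:
`Cp(X)` is a g-space. -/
theorem kSpace_weaklyGrothendieck
    {X : Type*} [TopologicalSpace X] [CompletelyRegularSpace X] [T2Space X]
    (hk : IsKSpace X) : IsGSpace (Cp X) := by
  intro A hA
  choose M hM using fun z => cp_bound hA z
  have hsub : Subtype.val '' A ⊆ Set.pi univ (fun z => Icc (-(M z)) (M z)) := by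
    rintro ψ ⟨φ, hφ, rfl⟩ z _
    have := abs_le.mp (hM z φ hφ)
    exact ⟨this.1, this.2⟩
  have hPc : IsCompact (Set.pi univ (fun z => Icc (-(M z)) (M z))) :=
    isCompact_univ_pi fun z => isCompact_Icc
  have hCc : IsCompact (closure (Subtype.val '' A)) :=
    hPc.of_isClosed_subset isClosed_closure (closure_minimal hsub hPc.isClosed)
  have hcont : ∀ g ∈ closure (Subtype.val '' A), Continuous g := by
    intro g hg
    rw [continuous_iff_isClosed]
    intro C₀ hC₀
    rw [hk (g ⁻¹' C₀)]
    intro K hK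
    have hres : Continuous (K.restrict g) :=
      continuousOn_iff_continuous_restrict.mp (grothendieck_on hA hg hK)
    have heq : ((↑·) ⁻¹' (g ⁻¹' C₀) : Set K) = (K.restrict g) ⁻¹' C₀ := rfl
    rw [heq]
    exact hC₀.preimage hres
  have hrange : closure (Subtype.val '' A) ⊆ Set.range (Subtype.val : Cp X → X → ℝ) := by
    intro g hg
    exact ⟨⟨g, hcont g hg⟩, rfl⟩
  have hemb : @Topology.IsEmbedding (Cp X) (X → ℝ) (inferInstance : TopologicalSpace (Cp X)) _
      Subtype.val := Topology.IsEmbedding.subtypeVal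
  rw [hemb.closure_eq_preimage_closure_image A,
    hemb.isCompact_iff]
  convert hCc using 2
  exact Set.image_preimage_eq_of_subset hrange
end

section
/- Let X be a completely regular Hausdorff k-space and A ⊆ Cp(X,[0,1]). Then the closure of A in Cp(X,[0,1]) is compact if and only if DULC(A,X) holds. -/
open Set Filter Topology

lemma cpI_eval_continuous {X : Type*} [TopologicalSpace X] (z : X) :
    Continuous (fun f : CpI X => f.1 z) :=
  (continuous_apply z).comp continuous_subtype_val

lemma dulc_of_compact_closure {X : Type*} [TopologicalSpace X] {A : Set (CpI X)}
    (hc : IsCompact (closure A)) : DULC A := by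
  intro f hfA x 𝒰 𝒱 hx g h u v hg hgu hh hhv
  obtain ⟨y, hy⟩ := hx
  obtain ⟨Φ, -, hΦ⟩ := hc.ultrafilter_le_nhds (𝒰.map f)
    (le_principal_iff.2 (Ultrafilter.mem_map.2 (by
      have : (f ⁻¹' closure A) = univ :=
        eq_univ_of_forall fun n => subset_closure (hfA n)
      rw [this]; exact univ_mem)))
  have heval : ∀ z : X, Tendsto (fun n => (f n).1 z) (𝒰 : Filter ℕ) (nhds (Φ.1 z)) :=
    fun z => ((cpI_eval_continuous z).tendsto Φ).comp hΦ
  have hgn : ∀ n, g n = (f n).1 y := fun n =>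
    tendsto_nhds_unique (hg n) (((f n).2.tendsto y).comp hy)
  have hu : u = Φ.1 y := by
    refine tendsto_nhds_unique hgu ?_
    have : (fun n => (f n).1 y) = g := funext fun n => (hgn n).symm
    rw [← this]; exact heval y
  have hhm : ∀ m, h m = Φ.1 (x m) := fun m =>
    tendsto_nhds_unique (hh m) (heval (x m))
  have hv : v = Φ.1 y := by
    refine tendsto_nhds_unique hhv ?_
    have : (fun m => Φ.1 (x m)) = h := funext fun m => (hhm m).symm
    rw [← this]; exact (Φ.2.tendsto y).comp hy
  rw [hu, hv]

lemma tendsto_of_dist_le' {ι : Type*} {l : Filter ι} {u : ι → unitInterval} {c : unitInterval}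
    {δs : ι → ℝ} (hδ : Tendsto δs l (nhds 0)) (h : ∀ᶠ n in l, dist (u n) c ≤ δs n) :
    Tendsto u l (nhds c) := by
  rw [tendsto_iff_dist_tendsto_zero]
  exact squeeze_zero' (Eventually.of_forall fun n => dist_nonneg) h hδ

lemma continuous_restrict_of_DULC {X : Type*} [TopologicalSpace X] {A : Set (CpI X)}
    (hd : DULC A) (F : X → unitInterval)
    (hF : F ∈ closure ((fun f : CpI X => f.1) '' A))
    (K : Set X) (hK : IsCompact K) : Continuous (fun k : K => F k.1) := by
  by_contra hnc
  rw [continuous_iff_continuousAt] at hnc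
  push_neg at hnc
  obtain ⟨y, hy⟩ := hnc
  rw [ContinuousAt, Metric.tendsto_nhds] at hy
  push_neg at hy
  obtain ⟨ε, hε, hfreq⟩ := hy
  -- build the sequence
  set P : ℝ × CpI X × K → Prop := fun a =>
    0 < a.1 ∧ a.2.1 ∈ A ∧ dist ((a.2.1).1 y.1) (F y.1) < a.1 ∧
      ε ≤ dist (F a.2.2.1) (F y.1) with hP
  set r : ℝ × CpI X × K → ℝ × CpI X × K → Prop := fun a b =>
    b.1 ≤ a.1 / 2 ∧ dist ((b.2.1).1 a.2.2.1) (F a.2.2.1) < b.1 ∧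
      dist ((a.2.1).1 b.2.2.1) ((a.2.1).1 y.1) < b.1 with hr
  obtain ⟨p, hp, hpr⟩ : ∃ p : ℕ → ℝ × CpI X × K, (∀ n, P (p n)) ∧
      ∀ m n, m < n → r (p m) (p n) := by
    apply exists_seq_of_forall_finset_exists P r
    intro s hs
    -- choose δ
    obtain ⟨δ, hδpos, hδle⟩ : ∃ δ : ℝ, 0 < δ ∧ ∀ a ∈ s, δ ≤ a.1 / 2 := by
      refine ⟨(insert (1:ℝ) (s.image (fun a => a.1 / 2))).min' ⟨1, Finset.mem_insert_self _ _⟩,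
        ?_, ?_⟩
      · have hm := Finset.min'_mem (insert (1:ℝ) (s.image (fun a => a.1 / 2)))
          ⟨1, Finset.mem_insert_self _ _⟩
        rcases Finset.mem_insert.1 hm with h1 | h2
        · rw [h1]; norm_num
        · obtain ⟨a, ha, hae⟩ := Finset.mem_image.1 h2
          rw [← hae]
          have := (hs a ha).1
          linarith
      · intro a ha
        exact Finset.min'_le _ _ (Finset.mem_insert_of_mem
          (Finset.mem_image_of_mem _ ha))
    -- choose f ∈ A close to F at y and at all previous x's
    set U : Set (X → unitInterval) :=
      {G | dist (G y.1) (F y.1) < δ} ∩ ⋂ a ∈ s, {G | dist (G a.2.2.1) (F a.2.2.1) < δ} with hU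
    have hUopen : IsOpen U := by
      refine IsOpen.inter ?_ (isOpen_biInter_finset fun a _ => ?_)
      · exact isOpen_lt ((continuous_apply (y:X)).dist continuous_const) continuous_const
      · exact isOpen_lt ((continuous_apply (a.2.2:X)).dist continuous_const) continuous_const
    have hFU : F ∈ U := by
      constructor
      · simpa using hδpos
      · simp only [mem_iInter]
        intro a _
        simpa using hδpos
    obtain ⟨G, hGU, f, hfA, hfG⟩ : ∃ G ∈ U, ∃ f ∈ A, (fun f : CpI X => f.1) f = G := by
      obtain ⟨G, hG1, hG2⟩ := (mem_closure_iff.1 hF) U hUopen hFU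
      exact ⟨G, hG1, by simpa using hG2⟩
    -- choose x ∈ K near y for f and all previous f's, with F-jump
    set V : Set K :=
      {k | dist (f.1 k.1) (f.1 y.1) < δ} ∩ ⋂ a ∈ s, {k | dist ((a.2.1).1 k.1) ((a.2.1).1 y.1) < δ}
      with hV
    have hVopen : IsOpen V := by
      refine IsOpen.inter ?_ (isOpen_biInter_finset fun a _ => ?_)
      · exact isOpen_lt (((f.2.comp continuous_subtype_val).dist continuous_const)) continuous_const
      · exact isOpen_lt ((((a.2.1).2.comp continuous_subtype_val).dist continuous_const)) continuous_const
    have hyV : y ∈ V := by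
      constructor
      · simpa using hδpos
      · simp only [mem_iInter]; intro a _; simpa using hδpos
    obtain ⟨k, hkV, hkjump⟩ := Filter.frequently_iff.1 hfreq (hVopen.mem_nhds hyV)
    have hfG' : f.1 = G := hfG
    refine ⟨(δ, f, k), ⟨hδpos, hfA, ?_, hkjump⟩, ?_⟩
    · show dist (f.1 y.1) (F y.1) < δ
      rw [hfG']; exact hGU.1
    · intro a ha
      refine ⟨hδle a ha, ?_, ?_⟩
      · show dist (f.1 a.2.2.1) (F a.2.2.1) < δ
        rw [hfG']
        have := hGU.2
        simp only [mem_iInter] at this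
        exact this a ha
      · have := hkV.2
        simp only [mem_iInter] at this
        exact this a ha
  -- notation
  set δs : ℕ → ℝ := fun n => (p n).1 with hδs
  set fs : ℕ → CpI X := fun n => (p n).2.1 with hfs
  set xs : ℕ → K := fun n => (p n).2.2 with hxs
  have hδpos : ∀ n, 0 < δs n := fun n => (hp n).1
  have hδhalf : ∀ n, δs (n + 1) ≤ δs n / 2 := fun n => (hpr n (n+1) (Nat.lt_succ_self n)).1
  have hδgeom : ∀ n, δs n ≤ δs 0 * (1/2) ^ n := by
    intro n
    induction n with
    | zero => simp
    | succ n ih =>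
      calc δs (n+1) ≤ δs n / 2 := hδhalf n
        _ ≤ (δs 0 * (1/2)^n) / 2 := by linarith
        _ = δs 0 * (1/2)^(n+1) := by ring
  have hδ0 : Tendsto δs atTop (nhds 0) := by
    have hgeo : Tendsto (fun n => δs 0 * (1/2:ℝ) ^ n) atTop (nhds 0) := by
      have := (tendsto_pow_atTop_nhds_zero_of_lt_one (by norm_num : (0:ℝ) ≤ 1/2)
        (by norm_num : (1/2:ℝ) < 1)).const_mul (δs 0)
      simpa using this
    exact tendsto_of_tendsto_of_tendsto_of_le_of_le tendsto_const_nhds hgeo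
      (fun n => (hδpos n).le) hδgeom
  -- the ultrafilter
  set 𝒱 : Ultrafilter ℕ := hyperfilter ℕ with h𝒱
  have h𝒱le : (𝒱 : Filter ℕ) ≤ atTop := by
    rw [← Nat.cofinite_eq_atTop]; exact hyperfilter_le_cofinite
  -- limit of xs along 𝒱 in X
  obtain ⟨z, -, hz⟩ := hK.ultrafilter_le_nhds (𝒱.map fun m => (xs m).1)
    (le_principal_iff.2 (Ultrafilter.mem_map.2 (by
      have : ((fun m => ((xs m : K) : X)) ⁻¹' K) = univ :=
        eq_univ_of_forall fun m => (xs m).2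
      rw [this]; exact univ_mem)))
  -- limit of F(xs) along 𝒱 in unitInterval
  obtain ⟨v, -, hv⟩ := isCompact_univ.ultrafilter_le_nhds (𝒱.map fun m => F (xs m).1)
    (le_principal_iff.2 univ_mem)
  -- the three tendsto conditions
  have hg : ∀ n, Tendsto (fun m => (fs n).1 (xs m).1) (𝒱 : Filter ℕ)
      (nhds ((fs n).1 y.1)) := by
    intro n
    refine (tendsto_of_dist_le' hδ0 ?_).mono_left h𝒱le
    filter_upwards [eventually_gt_atTop n] with m hm
    exact ((hpr n m hm).2.2).le
  have hgu : Tendsto (fun n => (fs n).1 y.1) (𝒱 : Filter ℕ) (nhds (F y.1)) := by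
    refine (tendsto_of_dist_le' hδ0 ?_).mono_left h𝒱le
    exact Eventually.of_forall fun n => ((hp n).2.2.1).le
  have hh : ∀ m, Tendsto (fun n => (fs n).1 (xs m).1) (𝒱 : Filter ℕ)
      (nhds (F (xs m).1)) := by
    intro m
    refine (tendsto_of_dist_le' hδ0 ?_).mono_left h𝒱le
    filter_upwards [eventually_gt_atTop m] with n hn
    exact ((hpr m n hn).2.1).le
  have key : F y.1 = v :=
    hd fs (fun n => (hp n).2.1) (fun m => (xs m).1) 𝒱 𝒱 ⟨z, hz⟩
      (fun n => (fs n).1 y.1) (fun m => F (xs m).1) (F y.1) v hg hgu hh hv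
  -- contradiction
  have hvC : ε ≤ dist v (F y.1) := by
    have hclosed : IsClosed {t : unitInterval | ε ≤ dist t (F y.1)} :=
      isClosed_le continuous_const (continuous_id.dist continuous_const)
    exact hclosed.mem_of_tendsto hv (Eventually.of_forall fun m => (hp m).2.2.2)
  rw [← key] at hvC
  simp at hvC
  linarith


lemma continuous_of_kspace {X : Type*} [TopologicalSpace X] (hk : IsKSpace X)
    (F : X → unitInterval)
    (h : ∀ K : Set X, IsCompact K → Continuous fun k : K => F k.1) : Continuous F := by
  rw [continuous_iff_isClosed]
  intro C hC
  rw [hk (F ⁻¹' C)]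
  intro K hK
  exact hC.preimage (h K hK)

/-- For a completely regular Hausdorff k-space `X`, a subset of
`Cp(X,[0,1])` has compact closure iff `DULC(A,X)` holds. -/
theorem kSpace_relativelyCompact_iff_DULC
    {X : Type*} [TopologicalSpace X] [CompletelyRegularSpace X] [T2Space X]
    (hk : IsKSpace X) (A : Set (CpI X)) :
    IsCompact (closure A) ↔ DULC A := by
  constructor
  · exact dulc_of_compact_closure
  · intro hd
    have hemb : Topology.IsEmbedding (fun f : CpI X => f.1) :=
      Topology.IsEmbedding.subtypeVal
    have hBc : IsCompact (closure ((fun f : CpI X => f.1) '' A)) :=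
      isClosed_closure.isCompact
    have hBsub : closure ((fun f : CpI X => f.1) '' A) ⊆ range (fun f : CpI X => f.1) := by
      intro F hF
      exact ⟨⟨F, continuous_of_kspace hk F
        (fun K hK => continuous_restrict_of_DULC hd F hF K hK)⟩, rfl⟩
    rw [hemb.closure_eq_preimage_closure_image A, hemb.isCompact_iff,
      Set.image_preimage_eq_of_subset hBsub]
    exact hBc
end

section
/- Let X be a separable completely regular Hausdorff space and A ⊆ Cp(X,[0,1]). Then the closure of A in Cp(X,[0,1]) is compact if and only if DULC(A,X) holds. -/
open Set Filter Topology

section AuxDULC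

variable {X : Type*} [TopologicalSpace X]

lemma cpi_eval_continuous (z : X) : Continuous (fun φ : CpI X => φ.1 z) :=
  (continuous_apply z).comp continuous_subtype_val

/-- Forward direction: compact closure implies DULC. -/
lemma dulc_of_isCompact_closure {A : Set (CpI X)} (hK : IsCompact (closure A)) : DULC A := by
  rintro f hf x 𝒰 𝒱 ⟨y, hy⟩ g h u v hg hgu hh hhv
  have hle : ↑(𝒰.map f) ≤ 𝓟 (closure A) := by
    rw [Ultrafilter.coe_map, le_principal_iff, mem_map]
    exact univ_mem' fun n => subset_closure (hf n)
  obtain ⟨G, -, hGle⟩ := hK.ultrafilter_le_nhds (𝒰.map f) hle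
  have hGf : Tendsto f (𝒰 : Filter ℕ) (𝓝 G) := by
    rwa [Tendsto, ← Ultrafilter.coe_map]
  have heval : ∀ z : X, Tendsto (fun n => (f n).1 z) (𝒰 : Filter ℕ) (𝓝 (G.1 z)) :=
    fun z => ((cpi_eval_continuous z).tendsto G).comp hGf
  have hgeq : g = fun n => (f n).1 y := by
    funext n
    exact tendsto_nhds_unique (hg n) (((f n).2.tendsto y).comp hy)
  have hu : u = G.1 y := by
    refine tendsto_nhds_unique ?_ (heval y)
    rw [hgeq] at hgu; exact hgu
  have hheq : h = fun m => G.1 (x m) := by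
    funext m
    exact tendsto_nhds_unique (hh m) (heval (x m))
  have hv : v = G.1 y := by
    refine tendsto_nhds_unique ?_ ((G.2.tendsto y).comp hy)
    rw [hheq] at hhv; exact hhv
  rw [hu, hv]

/-- Key step for the backward direction: DULC forces any pointwise closure point of `A`
to be "continuous along the dense sequence `d` relative to each point `y`". -/
lemma tendsto_comap_of_DULC {A : Set (CpI X)} (hD : DULC A) {d : ℕ → X}
    {F : X → unitInterval}
    (hF : F ∈ closure (Subtype.val '' A)) (y : X) :
    Tendsto (fun m => F (d m)) (comap d (𝓝 y)) (𝓝 (F y)) := by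
  classical
  set e : (X → unitInterval) → (ℕ → unitInterval) × unitInterval :=
    fun G => (fun m => G (d m), G y) with he
  have hecont : Continuous e :=
    (continuous_pi fun m => continuous_apply (d m)).prodMk (continuous_apply y)
  have h1 : e F ∈ closure (e '' (Subtype.val '' A)) :=
    (image_closure_subset_closure_image hecont) (mem_image_of_mem e hF)
  obtain ⟨s, hsmem, hslim⟩ := mem_closure_iff_seq_limit.mp h1
  have hsm : ∀ n, ∃ a : CpI X, a ∈ A ∧ e a.1 = s n := by
    intro n
    rcases hsmem n with ⟨G, ⟨a, haA, rfl⟩, hGe⟩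
    exact ⟨a, haA, hGe⟩
  choose f hfA hfe using hsm
  have hslim' : Tendsto (fun n => e (f n).1) atTop (𝓝 (e F)) := by
    simpa only [hfe] using hslim
  have hfy : Tendsto (fun n => (f n).1 y) atTop (𝓝 (F y)) :=
    (continuous_snd.tendsto (e F)).comp hslim'
  have hfd : ∀ m, Tendsto (fun n => (f n).1 (d m)) atTop (𝓝 (F (d m))) := fun m =>
    (((continuous_apply m).comp continuous_fst).tendsto (e F)).comp hslim'
  rw [tendsto_iff_ultrafilter]
  intro 𝒱 h𝒱
  have hdy : Tendsto d (𝒱 : Filter ℕ) (𝓝 y) := tendsto_iff_comap.mpr h𝒱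
  set 𝒰 : Ultrafilter ℕ := Ultrafilter.of atTop with h𝒰def
  have h𝒰 : (𝒰 : Filter ℕ) ≤ atTop := Ultrafilter.of_le atTop
  set v : unitInterval := (𝒱.map (fun m => F (d m))).lim with hvdef
  have hv : Tendsto (fun m => F (d m)) (𝒱 : Filter ℕ) (𝓝 v) := by
    have := Ultrafilter.le_nhds_lim (𝒱.map (fun m => F (d m)))
    rwa [Ultrafilter.coe_map] at this
  have key : F y = v :=
    hD f hfA d 𝒰 𝒱 ⟨y, hdy⟩ (fun n => (f n).1 y) (fun m => F (d m)) (F y) v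
      (fun n => (((f n).2.tendsto y).comp hdy))
      (hfy.mono_left h𝒰)
      (fun m => (hfd m).mono_left h𝒰)
      hv
  rwa [key]

/-- If `F` is continuous along the dense sequence relative to every point, it is continuous. -/
lemma continuous_of_tendsto_comap {d : ℕ → X} (hd : DenseRange d) {F : X → unitInterval}
    (hT : ∀ y, Tendsto (fun m => F (d m)) (comap d (𝓝 y)) (𝓝 (F y))) : Continuous F := by
  rw [continuous_iff_continuousAt]
  intro y
  rw [ContinuousAt, Metric.tendsto_nhds]
  intro ε hε
  have key : ∀ z : X, ∃ t ∈ 𝓝 z, ∀ m, d m ∈ t → dist (F (d m)) (F z) < ε / 3 := by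
    intro z
    have h1 : ∀ᶠ m in comap d (𝓝 z), dist (F (d m)) (F z) < ε / 3 :=
      Metric.tendsto_nhds.mp (hT z) (ε / 3) (by linarith)
    rw [eventually_comap] at h1
    exact ⟨_, h1, fun m hm => hm m rfl⟩
  obtain ⟨t, ht, htP⟩ := key y
  filter_upwards [interior_mem_nhds.mpr ht] with x hx
  obtain ⟨t', ht', htP'⟩ := key x
  have hne : (interior t' ∩ interior t).Nonempty :=
    ⟨x, mem_interior_iff_mem_nhds.mpr ht', hx⟩
  obtain ⟨m, hm⟩ := hd.exists_mem_open (isOpen_interior.inter isOpen_interior) hne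
  have h1 := htP' m (interior_subset hm.1)
  have h2 := htP m (interior_subset hm.2)
  rw [dist_comm] at h1
  calc dist (F x) (F y) ≤ dist (F x) (F (d m)) + dist (F (d m)) (F y) := dist_triangle _ _ _
    _ < ε := by linarith

end AuxDULC

/-- For a separable completely regular Hausdorff space `X`, a subset of
`Cp(X,[0,1])` has compact closure iff `DULC(A,X)` holds. -/
theorem separable_relativelyCompact_iff_DULC
    {X : Type*} [TopologicalSpace X] [CompletelyRegularSpace X] [T2Space X]
    [TopologicalSpace.SeparableSpace X] (A : Set (CpI X)) :
    IsCompact (closure A) ↔ DULC A := by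
  constructor
  · exact fun hK => dulc_of_isCompact_closure hK
  · intro hD
    by_cases hX : Nonempty X
    · obtain ⟨d, hd⟩ := TopologicalSpace.exists_dense_seq X
      have hcont : ∀ F ∈ closure (Subtype.val '' A), Continuous F := fun F hF =>
        continuous_of_tendsto_comap hd (fun y => tendsto_comap_of_DULC hD hF y)
      have hemb : Topology.IsEmbedding (Subtype.val : CpI X → X → unitInterval) :=
        Topology.IsEmbedding.subtypeVal
      rw [show closure A = (Subtype.val : CpI X → X → unitInterval) ⁻¹' closure (Subtype.val '' A) from
        hemb.toIsInducing.closure_eq_preimage_closure_image A]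
      refine (show @IsCompact (CpI X) (instTopologicalSpaceCpI X)
          ((Subtype.val : CpI X → X → unitInterval) ⁻¹' closure (Subtype.val '' A)) ↔
          IsCompact (Subtype.val '' ((Subtype.val : CpI X → X → unitInterval) ⁻¹'
            closure (Subtype.val '' A))) from
        hemb.isCompact_iff).mpr ?_
      have himg : Subtype.val '' ((Subtype.val : CpI X → X → unitInterval) ⁻¹'
          closure (Subtype.val '' A)) = closure (Subtype.val '' A) := by
        apply Set.image_preimage_eq_of_subset
        intro F hF
        exact ⟨⟨F, hcont F hF⟩, rfl⟩
      rw [himg]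
      exact isClosed_closure.isCompact
    · haveI : IsEmpty X := not_nonempty_iff.mp hX
      haveI : Subsingleton (CpI X) :=
        ⟨fun a b => Subtype.ext (funext fun x => isEmptyElim x)⟩
      exact (Set.toFinite _).isCompact
end

section
/- Let Y be a dense subspace of a completely regular Hausdorff space X. If Y is Grothendieck, then X is Grothendieck. -/
open Set Filter Topology

/-- `X` is Grothendieck if `Cp(X)` is a hereditary g-space. -/
def IsGrothendieck (X : Type*) [TopologicalSpace X] : Prop :=
  IsHereditaryGSpace (Cp X)

section AuxGrothendieckDense

variable {X : Type*} [TopologicalSpace X]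

/-- Restriction of a bare function to a subset. -/
private def resF (Y : Set X) (g : X → ℝ) : ↥Y → ℝ := fun y => g ↑y

private lemma continuous_resF (Y : Set X) : Continuous (resF (X := X) Y) :=
  continuous_pi fun y => continuous_apply (y : X)

/-- Restriction of a continuous function to a subset, as a map `Cp X → Cp ↥Y`. -/
private def resC (Y : Set X) (f : Cp X) : Cp ↥Y :=
  ⟨fun y => f.1 ↑y, f.2.comp continuous_subtype_val⟩

private lemma continuous_resC (Y : Set X) : Continuous (resC (X := X) Y) :=
  Continuous.subtype_mk
    ((continuous_resF Y).comp (continuous_subtype_val :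
      Continuous (Subtype.val : Cp X → (X → ℝ)))) _

private lemma resC_inj {Y : Set X} (hY : Dense Y) :
    Function.Injective (resC (X := X) Y) := by
  intro f g h
  apply Subtype.ext
  apply Continuous.ext_on hY f.2 g.2
  intro z hz
  exact congrFun (congrArg Subtype.val h) ⟨z, hz⟩

/-- The key consequence of the hereditary g-space property, in ambient form:
if every infinite subset of `T ⊆ M` has a limit point in `M`, then the **full**
closure of `T` is compact and contained in `M`. -/
private lemma hered_g_closure {Z : Type*} [TopologicalSpace Z] [T2Space Z]
    (hg : IsHereditaryGSpace Z) (M T : Set Z) (hTM : T ⊆ M)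
    (hcc : ∀ S : Set Z, S ⊆ T → S.Infinite →
      ∃ q ∈ M, ∀ U : Set Z, IsOpen U → q ∈ U → (S ∩ U).Infinite) :
    IsCompact (closure T) ∧ closure T ⊆ M := by
  have hGM := hg M
  have hcc' : CountablyCompactIn (Subtype.val ⁻¹' T : Set ↥M) Set.univ := by
    intro S' hS'A hS'inf
    obtain ⟨q, hqM, hq⟩ := hcc (Subtype.val '' S')
      (by rintro _ ⟨m, hm, rfl⟩; exact hS'A hm)
      (hS'inf.image Subtype.val_injective.injOn)
    refine ⟨⟨q, hqM⟩, mem_univ _, ?_⟩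
    intro U' hU' hqU'
    obtain ⟨U, hU, rfl⟩ := isOpen_induced_iff.mp hU'
    have hinf := hq U hU hqU'
    have himg : Subtype.val '' (S' ∩ Subtype.val ⁻¹' U) = Subtype.val '' S' ∩ U :=
      Set.image_inter_preimage _ _ _
    exact Set.Infinite.of_image _ (by rw [himg]; exact hinf)
  have hcomp := hGM _ hcc'
  have hval : Subtype.val '' (Subtype.val ⁻¹' T : Set ↥M) = T := by
    rw [Subtype.image_preimage_val]
    exact inter_eq_self_of_subset_right hTM
  have h1 : closure (Subtype.val ⁻¹' T : Set ↥M) = Subtype.val ⁻¹' (closure T) := by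
    rw [IsEmbedding.subtypeVal.closure_eq_preimage_closure_image, hval]
  have hclo : Subtype.val '' (closure (Subtype.val ⁻¹' T : Set ↥M)) = M ∩ closure T := by
    rw [h1, Subtype.image_preimage_val]
  have hK : IsCompact (M ∩ closure T) := hclo ▸ hcomp.image continuous_subtype_val
  have hsub : closure T ⊆ M ∩ closure T := by
    have h2 : T ⊆ M ∩ closure T := subset_inter hTM subset_closure
    have h3 := closure_mono h2
    rwa [hK.isClosed.closure_eq] at h3
  have heq : M ∩ closure T = closure T :=
    subset_antisymm inter_subset_right hsub
  exact ⟨heq ▸ hK, fun z hz => (hsub hz).1⟩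

end AuxGrothendieckDense

/-- If a dense subspace `Y` of `X` is Grothendieck, so is `X`. -/
theorem grothendieck_of_dense_subspace
    {X : Type*} [TopologicalSpace X] [CompletelyRegularSpace X] [T2Space X]
    (Y : Set X) (hY : Dense Y) (hG : IsGrothendieck Y) : IsGrothendieck X := by
  intro B A hCC
  classical
  haveI : T2Space (Cp ↥Y) := inferInstanceAs (T2Space {f : ↥Y → ℝ // Continuous f})
  haveI : T2Space (Cp X) := inferInstanceAs (T2Space {f : X → ℝ // Continuous f})
  set 𝔸 : Set (Cp X) := Subtype.val '' A with h𝔸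
  have h𝔸B : 𝔸 ⊆ B := by rintro _ ⟨a, _, rfl⟩; exact a.2
  set PA : Set (X → ℝ) := Subtype.val '' 𝔸 with hPA
  set PB : Set (X → ℝ) := Subtype.val '' B with hPB
  -- countable compactness of A in B, in ambient form
  have hccA : ∀ S : Set (Cp X), S ⊆ 𝔸 → S.Infinite →
      ∃ p ∈ B, ∀ U : Set (Cp X), IsOpen U → p ∈ U → (S ∩ U).Infinite := by
    intro S hS hSinf
    have hS'A : (Subtype.val ⁻¹' S : Set ↥B) ⊆ A := by
      intro g hg
      obtain ⟨a, haA, hav⟩ := hS hg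
      have hag : a = g := Subtype.val_injective hav
      rwa [← hag]
    have hSval : Subtype.val '' (Subtype.val ⁻¹' S : Set ↥B) = S := by
      rw [Subtype.image_preimage_val]
      exact inter_eq_self_of_subset_right (hS.trans h𝔸B)
    have hSinf' : (Subtype.val ⁻¹' S : Set ↥B).Infinite :=
      Set.Infinite.of_image _ (by rwa [hSval])
    obtain ⟨p', _, hp'⟩ := hCC _ hS'A hSinf'
    refine ⟨↑p', p'.2, ?_⟩
    intro U hU hpU
    have hinf := hp' (Subtype.val ⁻¹' U) (hU.preimage continuous_subtype_val) hpU
    have himg : Subtype.val '' (Subtype.val ⁻¹' S ∩ Subtype.val ⁻¹' U : Set ↥B) ⊆ S ∩ U := by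
      rintro _ ⟨g, ⟨hg1, hg2⟩, rfl⟩; exact ⟨hg1, hg2⟩
    exact ((hinf.image Subtype.val_injective.injOn).mono himg)
  -- pointwise boundedness
  have hbdd : ∀ x : X, ∃ Mx : ℝ, ∀ a ∈ 𝔸, |a.1 x| ≤ Mx := by
    intro x
    by_contra hcon
    push_neg at hcon
    have hch : ∀ n : ℕ, ∃ a : Cp X, a ∈ 𝔸 ∧ (n : ℝ) < |a.1 x| := by
      intro n
      obtain ⟨a, ha, hgt⟩ := hcon n
      exact ⟨a, ha, hgt⟩
    choose a ha hlt using hch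
    have hSsub : Set.range a ⊆ 𝔸 := by rintro _ ⟨n, rfl⟩; exact ha n
    have hSinf : (Set.range a).Infinite := by
      intro hfin
      obtain ⟨b₀, hb₀⟩ := (hfin.image (fun g : Cp X => |g.1 x|)).bddAbove
      have h1 : |(a ⌈b₀⌉₊).1 x| ≤ b₀ := hb₀ ⟨a ⌈b₀⌉₊, ⟨⌈b₀⌉₊, rfl⟩, rfl⟩
      have h2 := hlt ⌈b₀⌉₊
      have h3 : b₀ ≤ (⌈b₀⌉₊ : ℝ) := Nat.le_ceil b₀
      linarith
    obtain ⟨p, hpB, hp⟩ := hccA _ hSsub hSinf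
    have hcont : Continuous fun g : Cp X => |g.1 x - p.1 x| :=
      (((continuous_apply x).comp (continuous_subtype_val :
        Continuous (Subtype.val : Cp X → (X → ℝ)))).sub continuous_const).abs
    have hUopen : IsOpen {g : Cp X | |g.1 x - p.1 x| < 1} := isOpen_Iio.preimage hcont
    have hpU : p ∈ {g : Cp X | |g.1 x - p.1 x| < 1} := by
      show |p.1 x - p.1 x| < 1
      simp
    have hinf := hp _ hUopen hpU
    have hsub2 : Set.range a ∩ {g : Cp X | |g.1 x - p.1 x| < 1} ⊆
        a '' (Set.Iio (⌈|p.1 x| + 1⌉₊)) := by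
      rintro g ⟨⟨n, rfl⟩, hgU⟩
      refine ⟨n, ?_, rfl⟩
      have h4 : |(a n).1 x| - |p.1 x| ≤ |(a n).1 x - p.1 x| := abs_sub_abs_le_abs_sub _ _
      have hgU' : |(a n).1 x - p.1 x| < 1 := hgU
      have h5 : (n : ℝ) < |p.1 x| + 1 := by linarith [hlt n]
      have h6 : ((n : ℝ)) < (⌈|p.1 x| + 1⌉₊ : ℝ) := lt_of_lt_of_le h5 (Nat.le_ceil _)
      exact_mod_cast h6
    exact hinf (Set.Finite.subset ((Set.finite_Iio _).image a) hsub2)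
  -- closure of PA in ℝ^X is compact
  have hCcomp : IsCompact (closure PA) := by
    choose Mx hMx using hbdd
    have hsub : PA ⊆ Set.pi Set.univ (fun x => Set.Icc (-(Mx x)) (Mx x)) := by
      rintro _ ⟨a, ha, rfl⟩ x _
      exact Set.mem_Icc.mpr (abs_le.mp (hMx x a ha))
    have hclosed : IsClosed (Set.pi Set.univ fun x => Set.Icc (-(Mx x)) (Mx x)) :=
      isClosed_set_pi fun x _ => isClosed_Icc
    exact IsCompact.of_isClosed_subset (isCompact_univ_pi fun x => isCompact_Icc)
      isClosed_closure (closure_minimal hsub hclosed)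
  -- transfer of countable compactness through restriction
  have hccT : ∀ (A₀ Q : Set (Cp X)), A₀ ⊆ 𝔸 →
      (∀ S : Set (Cp X), S ⊆ A₀ → ∀ p ∈ B,
        (∀ U : Set (Cp X), IsOpen U → p ∈ U → (S ∩ U).Infinite) → p ∈ Q) →
      ∀ S : Set (Cp ↥Y), S ⊆ resC Y '' A₀ → S.Infinite →
        ∃ q ∈ resC Y '' Q, ∀ U : Set (Cp ↥Y), IsOpen U → q ∈ U → (S ∩ U).Infinite := by
    intro A₀ Q hA₀ hQ S hS hSinf
    have hSsub : S ⊆ resC Y '' (A₀ ∩ resC Y ⁻¹' S) := by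
      intro s hs
      obtain ⟨a, haA₀, rfl⟩ := hS hs
      exact ⟨a, ⟨haA₀, hs⟩, rfl⟩
    have hS₀inf : (A₀ ∩ resC Y ⁻¹' S).Infinite :=
      Set.Infinite.of_image _ (hSinf.mono hSsub)
    obtain ⟨p, hpB, hp⟩ := hccA _ (inter_subset_left.trans hA₀) hS₀inf
    have hpQ : p ∈ Q := hQ _ inter_subset_left p hpB hp
    refine ⟨resC Y p, ⟨p, hpQ, rfl⟩, ?_⟩
    intro U hU hqU
    have h2 := hp (resC Y ⁻¹' U) (hU.preimage (continuous_resC Y)) hqU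
    have himg : resC Y '' ((A₀ ∩ resC Y ⁻¹' S) ∩ resC Y ⁻¹' U) ⊆ S ∩ U := by
      rintro _ ⟨a, ⟨⟨_, ha2⟩, ha3⟩, rfl⟩; exact ⟨ha2, ha3⟩
    exact (h2.image (resC_inj hY).injOn).mono himg
  -- first application: the closure of the restrictions lands in resC '' B
  have h1 := hered_g_closure hG (resC Y '' B) (resC Y '' 𝔸)
      (Set.image_mono h𝔸B)
      (fun S hS hSinf => hccT 𝔸 B subset_rfl (fun _ _ p hpB _ => hpB) S hS hSinf)
  -- the main claim: closure PA ⊆ PB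
  have hDB : closure PA ⊆ PB := by
    intro f hf
    obtain ⟨G, hGA, hGf⟩ := mem_closure_iff_ultrafilter.mp hf
    have hjKc : IsCompact (Subtype.val '' closure (resC Y '' 𝔸) : Set (↥Y → ℝ)) :=
      h1.1.image (continuous_subtype_val : Continuous (Subtype.val : Cp ↥Y → (↥Y → ℝ)))
    have hWmem : (Subtype.val '' closure (resC Y '' 𝔸) : Set (↥Y → ℝ)) ∈ G.map (resF Y) := by
      apply Ultrafilter.mem_map.mpr
      apply mem_of_superset hGA
      rintro _ ⟨a, ha𝔸, rfl⟩
      exact ⟨resC Y a, subset_closure ⟨a, ha𝔸, rfl⟩, rfl⟩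
    obtain ⟨k, hkjK, hWk⟩ := hjKc.ultrafilter_le_nhds (G.map (resF Y))
      (le_principal_iff.mpr hWmem)
    have hWf : ((G.map (resF Y) : Ultrafilter (↥Y → ℝ)) : Filter (↥Y → ℝ)) ≤ 𝓝 (resF Y f) := by
      calc ((G.map (resF Y) : Ultrafilter (↥Y → ℝ)) : Filter (↥Y → ℝ))
          = Filter.map (resF Y) ↑G := Ultrafilter.coe_map _ _
        _ ≤ Filter.map (resF Y) (𝓝 f) := Filter.map_mono hGf
        _ ≤ 𝓝 (resF Y f) := (continuous_resF Y).tendsto f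
    have hk : k = resF Y f := eq_of_nhds_neBot (Filter.neBot_of_le (le_inf hWk hWf))
    obtain ⟨q, hq𝒦, hqval⟩ := hkjK
    obtain ⟨b, hbB, hbq⟩ := h1.2 hq𝒦
    have hbY : ∀ y : ↥Y, b.1 ↑y = f ↑y := by
      intro y
      have h3 : (Subtype.val (resC Y b) : ↥Y → ℝ) = resF Y f := by
        rw [hbq, hqval]; exact hk
      exact congrFun h3 y
    -- pointwise agreement on all of X, by the puncture trick
    have hfb : f = b.1 := by
      funext x
      by_contra hne
      have hδ : 0 < |f x - b.1 x| := abs_pos.mpr (sub_ne_zero.mpr hne)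
      set δ : ℝ := |f x - b.1 x| with hδdef
      set σ : ℝ := δ / 2 with hσdef
      have hσ : 0 < σ := by positivity
      set Acp : Set (Cp X) := 𝔸 ∩ {a : Cp X | |a.1 x - f x| < σ} with hAcp
      set Qcp : Set (Cp X) := B ∩ {p : Cp X | |p.1 x - f x| ≤ σ} with hQcp
      have hQlim : ∀ S : Set (Cp X), S ⊆ Acp → ∀ p ∈ B,
          (∀ U : Set (Cp X), IsOpen U → p ∈ U → (S ∩ U).Infinite) → p ∈ Qcp := by
        intro S hS p hpB hp
        refine ⟨hpB, ?_⟩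
        by_contra hgt
        have hgt' : σ < |p.1 x - f x| := lt_of_not_ge fun hle => hgt hle
        have hηpos : 0 < |p.1 x - f x| - σ := by linarith
        have hcont : Continuous fun g : Cp X => |g.1 x - p.1 x| :=
          (((continuous_apply x).comp (continuous_subtype_val :
            Continuous (Subtype.val : Cp X → (X → ℝ)))).sub continuous_const).abs
        have hUopen : IsOpen {g : Cp X | |g.1 x - p.1 x| < |p.1 x - f x| - σ} :=
          isOpen_Iio.preimage hcont
        have hmemp : p ∈ {g : Cp X | |g.1 x - p.1 x| < |p.1 x - f x| - σ} := by
          simpa using hηpos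
        obtain ⟨a, haS, haU⟩ := (hp _ hUopen hmemp).nonempty
        have h4 : |a.1 x - f x| < σ := (hS haS).2
        have h5 : |a.1 x - p.1 x| < |p.1 x - f x| - σ := haU
        have h6 : |p.1 x - f x| ≤ |p.1 x - a.1 x| + |a.1 x - f x| := abs_sub_le _ _ _
        have h7 : |p.1 x - a.1 x| = |a.1 x - p.1 x| := abs_sub_comm _ _
        linarith
      have h2 := hered_g_closure hG (resC Y '' Acp ∪ resC Y '' Qcp) (resC Y '' Acp)
        subset_union_left
        (fun S hS hSinf => by
          obtain ⟨q', hq', h''⟩ := hccT Acp Qcp inter_subset_left hQlim S hS hSinf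
          exact ⟨q', Or.inr hq', h''⟩)
      -- resC Y b lies in the closure of resC Y '' Acp
      have hGmem : (Subtype.val '' Acp : Set (X → ℝ)) ∈ G := by
        have hvalA : (Subtype.val '' Acp : Set (X → ℝ)) =
            PA ∩ {g : X → ℝ | |g x - f x| < σ} := by
          ext g
          constructor
          · rintro ⟨a, ⟨ha𝔸, ha2⟩, rfl⟩; exact ⟨⟨a, ha𝔸, rfl⟩, ha2⟩
          · rintro ⟨⟨a, ha𝔸, rfl⟩, hg2⟩; exact ⟨a, ⟨ha𝔸, hg2⟩, rfl⟩
        rw [hvalA]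
        refine Filter.inter_mem hGA (hGf ?_)
        have hcont2 : Continuous fun g : X → ℝ => |g x - f x| :=
          ((continuous_apply x).sub continuous_const).abs
        have hopen2 : IsOpen {g : X → ℝ | |g x - f x| < σ} := isOpen_Iio.preimage hcont2
        exact hopen2.mem_nhds (by simpa using hσ)
      have hbcl : resC Y b ∈ closure (resC Y '' Acp) := by
        have heJ : Topology.IsEmbedding (Subtype.val : Cp ↥Y → (↥Y → ℝ)) :=
          IsEmbedding.subtypeVal
        refine (Set.ext_iff.mp (heJ.closure_eq_preimage_closure_image (s := resC Y '' Acp)) (resC Y b)).mpr ?_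
        have himg2 : (Subtype.val '' (resC Y '' Acp) : Set (↥Y → ℝ)) =
            resF Y '' (Subtype.val '' Acp) := by
          ext g
          constructor
          · rintro ⟨_, ⟨a, haAcp, rfl⟩, rfl⟩; exact ⟨a.1, ⟨a, haAcp, rfl⟩, rfl⟩
          · rintro ⟨_, ⟨a, haAcp, rfl⟩, rfl⟩; exact ⟨resC Y a, ⟨a, haAcp, rfl⟩, rfl⟩
        show (Subtype.val (resC Y b) : ↥Y → ℝ) ∈ closure (Subtype.val '' (resC Y '' Acp))
        rw [himg2]
        apply mem_closure_iff_ultrafilter.mpr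
        refine ⟨G.map (resF Y), ?_, ?_⟩
        · apply Ultrafilter.mem_map.mpr
          exact mem_of_superset hGmem (Set.subset_preimage_image _ _)
        · have h7 : (Subtype.val (resC Y b) : ↥Y → ℝ) = resF Y f :=
            funext fun y => hbY y
          rw [h7]
          exact hWf
      rcases h2.2 hbcl with ⟨a, haAcp, heq⟩ | ⟨p, hpQcp, heq⟩
      · have hba : b = a := resC_inj hY heq.symm
        have h3 : |a.1 x - f x| < σ := haAcp.2
        rw [← hba] at h3
        have h8 : δ = |b.1 x - f x| := by rw [hδdef, abs_sub_comm]
        rw [← h8] at h3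
        rw [hσdef] at h3
        linarith
      · have hbp : b = p := resC_inj hY heq.symm
        have h3 : |p.1 x - f x| ≤ σ := hpQcp.2
        rw [← hbp] at h3
        have h8 : δ = |b.1 x - f x| := by rw [hδdef, abs_sub_comm]
        rw [← h8] at h3
        rw [hσdef] at h3
        linarith
    rw [hPB]
    exact ⟨b, hbB, hfb.symm⟩
  -- final assembly
  have he : Topology.IsEmbedding
      ((Subtype.val : Cp X → (X → ℝ)) ∘ (Subtype.val : ↥B → Cp X)) :=
    IsEmbedding.subtypeVal.comp IsEmbedding.subtypeVal
  have heA : ((Subtype.val : Cp X → (X → ℝ)) ∘ (Subtype.val : ↥B → Cp X)) '' A = PA := by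
    exact Set.image_comp _ _ _
  have hrange : Set.range ((Subtype.val : Cp X → (X → ℝ)) ∘ (Subtype.val : ↥B → Cp X)) = PB := by
    exact (Set.range_comp _ _).trans (congrArg _ Subtype.range_val)
  have hclA : closure A =
      ((Subtype.val : Cp X → (X → ℝ)) ∘ (Subtype.val : ↥B → Cp X)) ⁻¹' (closure PA) := by
    rw [he.closure_eq_preimage_closure_image, heA]
  have himgA : ((Subtype.val : Cp X → (X → ℝ)) ∘ (Subtype.val : ↥B → Cp X)) '' (closure A)
      = closure PA := by
    rw [hclA, Set.image_preimage_eq_inter_range, hrange]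
    exact inter_eq_self_of_subset_left hDB
  exact he.isCompact_iff.mpr (himgA ▸ hCcomp)
end

section
/- Let X and Y be completely regular Hausdorff spaces and f : X → Y a continuous surjection. If X is Grothendieck, then Y is Grothendieck. -/
open Set Filter Topology

lemma isLimitPointOf_image {Z W : Type*} [TopologicalSpace Z] [TopologicalSpace W]
    (h : Z ≃ₜ W) {x : Z} {S : Set Z} (hx : IsLimitPointOf x S) :
    IsLimitPointOf (h x) (h '' S) := by
  intro U hU hxU
  have key : h '' (S ∩ h ⁻¹' U) ⊆ (h '' S) ∩ U := by
    rintro _ ⟨z, ⟨hz1, hz2⟩, rfl⟩; exact ⟨⟨z, hz1, rfl⟩, hz2⟩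
  exact ((hx (h ⁻¹' U) (hU.preimage h.continuous) hxU).image
    h.injective.injOn).mono key

lemma isGSpace_of_homeomorph {Z W : Type*} [TopologicalSpace Z] [TopologicalSpace W]
    (h : Z ≃ₜ W) (hW : IsGSpace W) : IsGSpace Z := by
  intro A hA
  have hA' : CountablyCompactIn (h '' A) Set.univ := by
    intro S hS hSinf
    obtain ⟨x, -, hx⟩ := hA (h ⁻¹' S)
      (fun z hz => by
        obtain ⟨w, hw, hwz⟩ := hS hz
        rwa [← h.injective hwz])
      (hSinf.preimage (by simp [h.surjective.range_eq]))
    refine ⟨h x, mem_univ _, ?_⟩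
    have := isLimitPointOf_image h hx
    rwa [h.image_preimage] at this
  have hc : IsCompact (closure (h '' A)) := hW _ hA'
  have : closure A = h.symm '' closure (h '' A) := by
    rw [h.symm.image_closure, Set.image_image]
    simp
  rw [this]
  exact hc.image h.symm.continuous


/-- The continuous image of a Grothendieck space is Grothendieck. -/
theorem grothendieck_of_continuous_image
    {X Y : Type*} [TopologicalSpace X] [CompletelyRegularSpace X] [T2Space X]
    [TopologicalSpace Y] [CompletelyRegularSpace Y] [T2Space Y]
    (f : X → Y) (hf : Continuous f) (hsurj : Function.Surjective f)
    (hG : IsGrothendieck X) : IsGrothendieck Y := by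
  set E : Cp Y → Cp X := fun g => ⟨g.1 ∘ f, g.2.comp hf⟩ with hE
  have hinj : Function.Injective E := by
    intro g1 g2 hg
    have : g1.1 ∘ f = g2.1 ∘ f := congrArg Subtype.val hg
    exact Subtype.ext (hsurj.injective_comp_right this)
  have hind : Topology.IsInducing E := by
    constructor
    change TopologicalSpace.induced (Subtype.val : Cp Y → Y → ℝ) Pi.topologicalSpace =
      TopologicalSpace.induced E (TopologicalSpace.induced (Subtype.val : Cp X → X → ℝ) Pi.topologicalSpace)
    rw [show TopologicalSpace.induced E (TopologicalSpace.induced (Subtype.val : Cp X → X → ℝ)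
      Pi.topologicalSpace) = TopologicalSpace.induced ((Subtype.val : Cp X → X → ℝ) ∘ E)
      Pi.topologicalSpace from induced_compose]
    have hco : (Subtype.val ∘ E : Cp Y → X → ℝ) = (fun g : Y → ℝ => g ∘ f) ∘ Subtype.val := rfl
    rw [hco]
    erw [show TopologicalSpace.induced ((fun g : Y → ℝ => g ∘ f) ∘ (Subtype.val : Cp Y → Y → ℝ))
      Pi.topologicalSpace = TopologicalSpace.induced (Subtype.val : Cp Y → Y → ℝ)
      (TopologicalSpace.induced (fun g : Y → ℝ => g ∘ f) Pi.topologicalSpace) from induced_compose.symm]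
    congr 1
    rw [Pi.induced_precomp f]
    exact (hsurj.iInf_comp _).symm
  have hemb : Topology.IsEmbedding E := ⟨hind, hinj⟩
  intro B
  have hembB : Topology.IsEmbedding (E ∘ (Subtype.val : B → Cp Y)) :=
    hemb.comp Topology.IsEmbedding.subtypeVal
  exact isGSpace_of_homeomorph (hembB.toHomeomorph)
    (hG (Set.range (E ∘ Subtype.val)))
end

section
/- Let Y be a completely regular Hausdorff space which is a g-space. Then Y is a hereditary g-space if and only if every compact subspace of Y is Fréchet-Urysohn. -/
open Set Filter Topology

section Helpers

variable {Y : Type*} [TopologicalSpace Y]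

lemma IsLimitPointOf.mono {x : Y} {S T : Set Y} (h : S ⊆ T) (hx : IsLimitPointOf x S) :
    IsLimitPointOf x T := fun U hU hxU =>
  (hx U hU hxU).mono (inter_subset_inter_left U h)

lemma IsLimitPointOf.mem_closure {x : Y} {S : Set Y} (hx : IsLimitPointOf x S) :
    x ∈ closure S := by
  rw [mem_closure_iff]
  intro U hU hxU
  exact ((hx U hU hxU).nonempty).imp fun z hz => ⟨hz.2, hz.1⟩

lemma isLimitPointOf_subtype {B S : Set Y} (hS : S ⊆ B) {x : Y} (hx : x ∈ B) :
    IsLimitPointOf (⟨x, hx⟩ : B) (((↑) : B → Y) ⁻¹' S) ↔ IsLimitPointOf x S := by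
  constructor
  · intro h V hV hxV
    have h1 := h (((↑) : B → Y) ⁻¹' V) (hV.preimage continuous_subtype_val) hxV
    have h2 : (((↑) : B → Y) '' ((((↑) : B → Y) ⁻¹' S) ∩ (((↑) : B → Y) ⁻¹' V))) ⊆ S ∩ V := by
      rintro y ⟨z, ⟨hz1, hz2⟩, rfl⟩; exact ⟨hz1, hz2⟩
    exact (h1.image (Subtype.coe_injective.injOn)).mono h2
  · intro h U hU hxU
    obtain ⟨V, hV, rfl⟩ := isOpen_induced_iff.mp hU
    have h1 : (S ∩ V).Infinite := h V hV hxU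
    have h2 : (((↑) : B → Y) ⁻¹' (S ∩ V)).Infinite :=
      h1.preimage (by rw [Subtype.range_coe]; exact fun y hy => hS hy.1)
    rwa [Set.preimage_inter] at h2

lemma exists_limitPoint_of_infinite {C S : Set Y} (hC : IsCompact C) (hSC : S ⊆ C)
    (hS : S.Infinite) : ∃ y ∈ closure S, IsLimitPointOf y S := by
  let e : ℕ ↪ S := Set.Infinite.natEmbedding S hS
  have hinj : Function.Injective fun n => (e n : Y) :=
    Subtype.coe_injective.comp e.injective
  have hu : ∀ n, (e n : Y) ∈ S := fun n => (e n).2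
  have hmap : Filter.map (fun n => (e n : Y)) atTop ≤ 𝓟 C := by
    rw [Filter.le_principal_iff, Filter.mem_map]
    exact Filter.Eventually.of_forall fun n => hSC (hu n)
  obtain ⟨y, _, hy⟩ := hC.exists_mapClusterPt hmap
  have hlim : IsLimitPointOf y S := by
    intro U hU hyU
    have hfreq : ∃ᶠ n in atTop, (e n : Y) ∈ U :=
      (mapClusterPt_iff_frequently.mp hy) U (hU.mem_nhds hyU)
    have hinf : {n | (e n : Y) ∈ U}.Infinite := Nat.frequently_atTop_iff_infinite.mp hfreq
    refine ((hinf.image hinj.injOn).mono ?_)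
    rintro z ⟨n, hn, rfl⟩; exact ⟨hu n, hn⟩
  exact ⟨y, hlim.mem_closure, hlim⟩

lemma tendsto_of_unique_limitPoint {C S : Set Y} (hC : IsCompact C) (hSC : S ⊆ C)
    (hS : S.Infinite) {x : Y} (hx : ∀ y, IsLimitPointOf y S → y = x) :
    ∃ u : ℕ → Y, (∀ n, u n ∈ S) ∧ Tendsto u atTop (𝓝 x) := by
  let e : ℕ ↪ S := Set.Infinite.natEmbedding S hS
  have hinj : Function.Injective fun n => (e n : Y) :=
    Subtype.coe_injective.comp e.injective
  refine ⟨fun n => e n, fun n => (e n).2, ?_⟩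
  rw [tendsto_nhds]
  intro U hU hxU
  by_contra hcon
  have hcon' : ∃ᶠ n in atTop, ¬ (e n : Y) ∈ U := Filter.not_eventually.mp hcon
  have hinf : {n | ¬ (e n : Y) ∈ U}.Infinite := Nat.frequently_atTop_iff_infinite.mp hcon'
  set T : Set Y := (fun n => (e n : Y)) '' {n | ¬ (e n : Y) ∈ U} with hT
  have hTinf : T.Infinite := hinf.image hinj.injOn
  have hTSU : T ⊆ S \ U := by rintro z ⟨n, hn, rfl⟩; exact ⟨(e n).2, hn⟩
  have hTS : T ⊆ S := hTSU.trans diff_subset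
  obtain ⟨y, _, hy⟩ := exists_limitPoint_of_infinite hC (hTS.trans hSC) hTinf
  have hyx : y = x := hx y (hy.mono hTS)
  have : (T ∩ U).Infinite := hy U hU (hyx ▸ hxU)
  refine this.nonempty.elim fun z hz => ?_
  exact (hTSU hz.1).2 hz.2

lemma countablyCompactIn_subtype {B A : Set Y} (hAB : A ⊆ B) :
    CountablyCompactIn (((↑) : B → Y) ⁻¹' A) univ ↔ CountablyCompactIn A B := by
  constructor
  · intro h S hSA hS
    have hSB : S ⊆ B := hSA.trans hAB
    have hS' : (((↑) : B → Y) ⁻¹' S).Infinite :=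
      hS.preimage (by rw [Subtype.range_coe]; exact hSB)
    obtain ⟨⟨x, hxB⟩, -, hx⟩ := h _ (Set.preimage_mono hSA) hS'
    exact ⟨x, hxB, (isLimitPointOf_subtype hSB hxB).mp hx⟩
  · intro h S' hS'A hS'
    set S : Set Y := (↑) '' S' with hSdef
    have hSA : S ⊆ A := by rintro _ ⟨z, hz, rfl⟩; exact hS'A hz
    have hSB : S ⊆ B := hSA.trans hAB
    have hS : S.Infinite := hS'.image Subtype.coe_injective.injOn
    obtain ⟨x, hxB, hx⟩ := h S hSA hS
    refine ⟨⟨x, hxB⟩, mem_univ _, ?_⟩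
    have := (isLimitPointOf_subtype hSB hxB).mpr hx
    rwa [hSdef, Set.preimage_image_eq S' Subtype.coe_injective] at this

end Helpers

/-- A g-space is a hereditary g-space iff every compact subspace is
Fréchet–Urysohn. -/
theorem gSpace_hereditary_iff_compact_frechetUrysohn
    {Y : Type*} [TopologicalSpace Y] [CompletelyRegularSpace Y] [T2Space Y]
    (hg : IsGSpace Y) :
    IsHereditaryGSpace Y ↔ ∀ K : Set Y, IsCompact K → FrechetUrysohnSpace K := by
  constructor
  · -- hereditary g-space → every compact subspace is Fréchet–Urysohn
    intro hhg K hK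
    constructor
    intro s x hx
    by_cases hxs : x ∈ s
    · exact ⟨fun _ => x, fun _ => hxs, tendsto_const_nhds⟩
    by_contra hseq
    set A : Set Y := (↑) '' s with hAdef
    have hAK : A ⊆ K := by rintro _ ⟨z, _, rfl⟩; exact z.2
    have hKc : IsClosed K := hK.isClosed
    have hclA : IsCompact (closure A) :=
      hK.of_isClosed_subset isClosed_closure (closure_minimal hAK hKc)
    have hxA : (x : Y) ∈ closure A := closure_subtype.mp hx
    have hxnA : (x : Y) ∉ A := by
      rintro ⟨z, hz, hze⟩
      exact hxs (Subtype.coe_injective hze ▸ hz)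
    set B : Set Y := closure A \ {(x : Y)} with hBdef
    have hAB : A ⊆ B := fun a ha =>
      ⟨subset_closure ha, fun he => hxnA (mem_singleton_iff.mp he ▸ ha)⟩
    have hcc : CountablyCompactIn A B := by
      intro S hSA hS
      have hSclA : S ⊆ closure A := hSA.trans subset_closure
      by_cases hss : ∃ y, IsLimitPointOf y S ∧ y ≠ (x : Y)
      · obtain ⟨y, hy, hyne⟩ := hss
        exact ⟨y, ⟨closure_mono hSA hy.mem_closure, hyne⟩, hy⟩
      · push_neg at hss
        obtain ⟨u, huS, hu⟩ := tendsto_of_unique_limitPoint hclA hSclA hS hss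
        have huA : ∀ n, u n ∈ A := fun n => hSA (huS n)
        choose v hv hve using huA
        refine absurd ⟨v, hv, ?_⟩ hseq
        rw [IsEmbedding.subtypeVal.tendsto_nhds_iff]
        have hvu : (Subtype.val ∘ v) = u := funext hve
        rw [hvu]
        exact hu
    have hcc' : CountablyCompactIn (((↑) : B → Y) ⁻¹' A) univ :=
      (countablyCompactIn_subtype hAB).mpr hcc
    have hcomp := hhg B _ hcc'
    have h1 : closure (((↑) : B → Y) ⁻¹' A) = ((↑) : B → Y) ⁻¹' (closure A) := by
      rw [IsEmbedding.subtypeVal.closure_eq_preimage_closure_image,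
        Subtype.image_preimage_coe, inter_eq_self_of_subset_right hAB]
    have h2 : IsCompact B := by
      have h3 := Subtype.isCompact_iff.mp hcomp
      rwa [h1, Subtype.image_preimage_coe,
        inter_eq_self_of_subset_left (diff_subset : B ⊆ closure A)] at h3
    have hsub : closure A ⊆ B := closure_minimal hAB h2.isClosed
    exact (hsub hxA).2 rfl
  · -- every compact subspace FU → hereditary g-space
    intro hFU B A' hcc'
    set A : Set Y := (↑) '' A' with hAdef
    have hAB : A ⊆ B := by rintro _ ⟨z, _, rfl⟩; exact z.2
    have hA' : (((↑) : B → Y) ⁻¹' A) = A' := Set.preimage_image_eq A' Subtype.coe_injective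
    have hccY : CountablyCompactIn A B :=
      (countablyCompactIn_subtype hAB).mp (hA' ▸ hcc')
    have hccU : CountablyCompactIn A univ := fun S hS hSi =>
      (hccY S hS hSi).imp fun y hy => ⟨mem_univ y, hy.2⟩
    have hK : IsCompact (closure A) := hg A hccU
    haveI := hFU (closure A) hK
    have hclB : closure A ⊆ B := by
      intro z hz
      have hAK : A ⊆ closure A := subset_closure
      have hzK : (⟨z, hz⟩ : closure A) ∈ closure (((↑) : closure A → Y) ⁻¹' A) := by
        rw [closure_subtype, Subtype.image_preimage_coe,
          inter_eq_self_of_subset_right hAK]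
        exact hz
      obtain ⟨u, hu, hulim⟩ := mem_closure_iff_seq_limit.mp hzK
      set a : ℕ → Y := fun n => ((u n : closure A) : Y) with hadef
      have haA : ∀ n, a n ∈ A := fun n => hu n
      have halim : Tendsto a atTop (𝓝 z) :=
        (continuous_subtype_val.tendsto _).comp hulim
      by_cases hfin : (range a).Finite
      · haveI := hfin.to_subtype
        obtain ⟨y, hy⟩ := Finite.exists_infinite_fiber (Set.rangeFactorization a)
        have hset : Set.rangeFactorization a ⁻¹' {y} = {n | a n = (y : Y)} := by
          ext n
          simp [Set.rangeFactorization, Subtype.ext_iff]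
        have hyinf : {n | a n = (y : Y)}.Infinite :=
          hset ▸ Set.infinite_coe_iff.mp hy
        have hfreq : ∃ᶠ n in atTop, a n = (y : Y) :=
          Nat.frequently_atTop_iff_infinite.mpr hyinf
        have hzy : z = (y : Y) :=
          tendsto_nhds_unique_of_frequently_eq halim tendsto_const_nhds hfreq
        obtain ⟨n₀, hn₀⟩ := y.2
        rw [hzy, ← hn₀]
        exact hAB (haA n₀)
      · have hrA : range a ⊆ A := range_subset_iff.mpr haA
        obtain ⟨y, hyB, hy⟩ := hccY (range a) hrA hfin
        have hyz : y = z := by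
          by_contra hne
          obtain ⟨U, V, hU, hV, hyU, hzV, hUV⟩ := t2_separation hne
          have hev : ∀ᶠ n in atTop, a n ∈ V := halim (hV.mem_nhds hzV)
          obtain ⟨N, hN⟩ := eventually_atTop.mp hev
          have hfin2 : (range a ∩ U).Finite := by
            refine Set.Finite.subset ((Set.finite_Iio N).image a) ?_
            rintro w ⟨⟨n, rfl⟩, hwU⟩
            refine ⟨n, ?_, rfl⟩
            by_contra hn
            exact (hUV.ne_of_mem hwU (hN n (le_of_not_gt hn))) rfl
          exact (hy U hU hyU) hfin2
        exact hyz ▸ hyB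
    rw [Subtype.isCompact_iff]
    have h1 : closure A' = ((↑) : B → Y) ⁻¹' (closure A) := by
      rw [← hA', IsEmbedding.subtypeVal.closure_eq_preimage_closure_image,
        Subtype.image_preimage_coe, inter_eq_self_of_subset_right hAB]
    rw [h1, Subtype.image_preimage_coe, inter_eq_self_of_subset_right hclB]
    exact hK
end
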